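/- arXiv:math/0010237 — 4 statements merged into one kernel-verified Lean document; each statement's English description precedes it below -/
import Mathlib

section
/- Let A and B be k×n matrices over a field 𝔽 such that A·Bᵗ is symmetric, and suppose the k×2n matrix C = (A,B) has rank k. Index the columns of A by I and those of B by I*, and let ℬ be the collection of all X ∈ J_k such that the k×k minor of C on the columns indexed by X is nonzero. Then ℬ satisfies the Maximality Property, i.e. ℬ is the collection of bases of a symplectic matroid of rank k. -/
open Finset Matrix
open scoped Classical

/-- The index set `J = I ∪ I*`: the element `(i, false)` represents the unstarred
index `i+1`, and `(i, true)` represents the starred index `(i+1)*`. -/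
abbrev JJ (n : ℕ) := Fin n × Bool

/-- The involution `* : J → J`. -/
def starJ {n : ℕ} (x : JJ n) : JJ n := (x.1, !x.2)

/-- A subset `A ⊆ J` is admissible iff `A ∩ A* = ∅`. -/
def AdmissibleSet {n : ℕ} (A : Finset (JJ n)) : Prop := ∀ x ∈ A, starJ x ∉ A

/-- An admissible permutation of `J`: one commuting with `*`.  These form the
hyperoctahedral group `W = BC_n`. -/
def AdmissiblePerm {n : ℕ} (w : Equiv.Perm (JJ n)) : Prop := ∀ x, w (starJ x) = starJ (w x)

/-- The standard ordering `n* < … < 1* < 1 < … < n` on `J`, encoded by a value in `ℤ`. -/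
def ordJ {n : ℕ} (x : JJ n) : ℤ := if x.2 then -((x.1 : ℤ) + 1) else (x.1 : ℤ) + 1

/-- The ordering `≤^w` on `J`: `x ≤^w y` iff `w⁻¹ x ≤ w⁻¹ y` in the standard order. -/
def leW {n : ℕ} (w : Equiv.Perm (JJ n)) (x y : JJ n) : Prop :=
  ordJ (w.symm x) ≤ ordJ (w.symm y)

/-- The (Gale) ordering induced by `≤^w` on admissible subsets: `A ≼^w B` iff the
sorted lists dominate componentwise, equivalently iff there is a bijection
`f : A → B` with `a ≤^w f a` for all `a ∈ A`. -/
def setLE {n : ℕ} (w : Equiv.Perm (JJ n)) (A B : Finset (JJ n)) : Prop :=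
  ∃ f : JJ n → JJ n, Set.BijOn f ↑A ↑B ∧ ∀ a ∈ A, leW w a (f a)

/-- `ℬ` is the collection of bases of a symplectic matroid of rank `k`: all members
are admissible `k`-sets, and for every admissible permutation `w` there is a
(necessarily unique) `≤^w`-maximal member (the Maximality Property). -/
def IsSymplecticMatroid {n : ℕ} (k : ℕ) (ℬ : Finset (Finset (JJ n))) : Prop :=
  (∀ A ∈ ℬ, AdmissibleSet A ∧ A.card = k) ∧
  ∀ w : Equiv.Perm (JJ n), AdmissiblePerm w → ∃ A ∈ ℬ, ∀ B ∈ ℬ, setLE w B A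

/-- A Lagrangian matroid is a symplectic matroid of rank `n`. -/
def IsLagrangianMatroid {n : ℕ} (ℬ : Finset (Finset (JJ n))) : Prop :=
  IsSymplecticMatroid n ℬ
/-- Identify `J` with the column index type of the `k × 2n` matrix `C = (A, B)`:
unstarred indices point at columns of `A`, starred ones at columns of `B`. -/
def toCol {n : ℕ} (x : JJ n) : Fin n ⊕ Fin n := if x.2 then Sum.inr x.1 else Sum.inl x.1

/-- The `k × k` minor of `C` on the columns indexed by `X` is nonzero
(this does not depend on the chosen enumeration of `X`). -/
def MinorNonzero {k n : ℕ} {𝕂 : Type*} [Field 𝕂] (C : Matrix (Fin k) (Fin n ⊕ Fin n) 𝕂)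
    (X : Finset (JJ n)) : Prop :=
  ∃ e : Fin k → JJ n, Function.Injective e ∧ Finset.univ.image e = X ∧
    (C.submatrix id fun i => toCol (e i)).det ≠ 0

/-- `ℬ` is the collection of admissible `k`-subsets of `J` whose corresponding
`k × k` minor of `C` is nonzero. -/
def RepBases {k n : ℕ} {𝕂 : Type*} [Field 𝕂] (C : Matrix (Fin k) (Fin n ⊕ Fin n) 𝕂)
    (ℬ : Finset (Finset (JJ n))) : Prop :=
  ∀ X : Finset (JJ n), X ∈ ℬ ↔ AdmissibleSet X ∧ X.card = k ∧ MinorNonzero C X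

set_option linter.unusedSectionVars false

section OrdJ

lemma ordJ_injective {n : ℕ} : Function.Injective (ordJ (n := n)) := by
  rintro ⟨i, b⟩ ⟨j, b'⟩ h
  cases b <;> cases b' <;> simp only [ordJ, if_true, if_false, Bool.false_eq_true,
    reduceIte] at h
  · have : i = j := Fin.ext (by omega)
    rw [this]
  · exfalso; omega
  · exfalso; omega
  · have : i = j := Fin.ext (by omega)
    rw [this]

lemma ordJ_ne_zero {n : ℕ} (x : JJ n) : ordJ x ≠ 0 := by
  obtain ⟨i, b⟩ := x; cases b <;> simp only [ordJ, if_true, if_false] <;> omega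

lemma ordJ_starJ {n : ℕ} (x : JJ n) : ordJ (starJ x) = -ordJ x := by
  obtain ⟨i, b⟩ := x; cases b <;> simp [ordJ, starJ]

lemma starJ_starJ {n : ℕ} (x : JJ n) : starJ (starJ x) = x := by
  obtain ⟨i, b⟩ := x; cases b <;> simp [starJ]

end OrdJ

section Greedy

open Submodule Module

variable {𝕂 : Type*} [Field 𝕂] {k : ℕ} {ι : Type*} [Fintype ι] [DecidableEq ι]

/-- The greedy set: elements whose column is not in the span of the columns of
strictly larger elements. -/
noncomputable def greedySet (key : ι → ℤ) (c : ι → Fin k → 𝕂) : Finset ι :=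
  Finset.univ.filter fun x => c x ∉ Submodule.span 𝕂
    (((Finset.univ.filter fun y => key x < key y).image c : Finset (Fin k → 𝕂)) : Set (Fin k → 𝕂))

lemma mem_greedySet {key : ι → ℤ} {c : ι → Fin k → 𝕂} {x : ι} :
    x ∈ greedySet key c ↔ c x ∉ Submodule.span 𝕂
      (((Finset.univ.filter fun y => key x < key y).image c : Finset (Fin k → 𝕂)) :
        Set (Fin k → 𝕂)) := by
  simp [greedySet]

lemma greedySet_span (key : ι → ℤ) (c : ι → Fin k → 𝕂) (x : ι) :
    c x ∈ Submodule.span 𝕂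
      ((((greedySet key c).filter fun y => key x ≤ key y).image c : Finset (Fin k → 𝕂)) :
        Set (Fin k → 𝕂)) := by
  suffices H : ∀ (m : ℕ) (x : ι), (Finset.univ.filter fun y => key x < key y).card ≤ m →
      c x ∈ Submodule.span 𝕂
        ((((greedySet key c).filter fun y => key x ≤ key y).image c : Finset (Fin k → 𝕂)) :
          Set (Fin k → 𝕂)) by
    exact H _ x le_rfl
  intro m
  induction m with
  | zero =>
    intro x hx
    by_cases hmem : x ∈ greedySet key c
    · exact Submodule.subset_span (by
        simp only [Finset.coe_image, Set.mem_image, Finset.mem_coe, Finset.mem_filter]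
        exact ⟨x, ⟨hmem, le_rfl⟩, rfl⟩)
    · rw [mem_greedySet, not_not] at hmem
      have hempty : (Finset.univ.filter fun y => key x < key y) = ∅ :=
        Finset.card_eq_zero.mp (Nat.le_zero.mp hx)
      rw [hempty] at hmem
      simp only [Finset.image_empty, Finset.coe_empty, Submodule.span_empty,
        Submodule.mem_bot] at hmem
      rw [hmem]; exact Submodule.zero_mem _
  | succ m ih =>
    intro x hx
    by_cases hmem : x ∈ greedySet key c
    · exact Submodule.subset_span (by
        simp only [Finset.coe_image, Set.mem_image, Finset.mem_coe, Finset.mem_filter]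
        exact ⟨x, ⟨hmem, le_rfl⟩, rfl⟩)
    · rw [mem_greedySet, not_not] at hmem
      refine Submodule.span_le.mpr ?_ hmem
      rintro v hv
      simp only [Finset.coe_image, Set.mem_image, Finset.mem_coe, Finset.mem_filter] at hv
      obtain ⟨y, ⟨-, hxy⟩, rfl⟩ := hv
      have hcard : (Finset.univ.filter fun z => key y < key z).card ≤ m := by
        have hymem : y ∈ Finset.univ.filter fun z => key x < key z :=
          Finset.mem_filter.mpr ⟨Finset.mem_univ _, hxy⟩
        have hss : (Finset.univ.filter fun z => key y < key z) ⊆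
            (Finset.univ.filter fun z => key x < key z).erase y := by
          intro z hz
          rw [Finset.mem_filter] at hz
          refine Finset.mem_erase.mpr ⟨?_, Finset.mem_filter.mpr
            ⟨Finset.mem_univ _, lt_trans hxy hz.2⟩⟩
          intro hzy
          rw [hzy] at hz
          exact lt_irrefl _ hz.2
        have h1 : ((Finset.univ.filter fun z => key x < key z).erase y).card
            = (Finset.univ.filter fun z => key x < key z).card - 1 :=
          Finset.card_erase_of_mem hymem
        have h2 := Finset.card_le_card hss
        omega
      refine SetLike.le_def.mp (Submodule.span_mono ?_) (ih y hcard)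
      refine Finset.coe_subset.mpr (Finset.image_subset_image ?_)
      intro z hz
      rw [Finset.mem_filter] at hz ⊢
      exact ⟨hz.1, le_of_lt (lt_of_lt_of_le hxy hz.2)⟩

lemma greedySet_indep {key : ι → ℤ} (hkey : Function.Injective key) (c : ι → Fin k → 𝕂) :
    LinearIndependent 𝕂 (fun x : ↥(greedySet key c) => c ↑x) := by
  rw [Fintype.linearIndependent_iff]
  intro g hg
  by_contra hne
  push_neg at hne
  obtain ⟨i0, hi0⟩ := hne
  have hS : (Finset.univ.filter fun i : ↥(greedySet key c) => g i ≠ 0).Nonempty :=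
    ⟨i0, Finset.mem_filter.mpr ⟨Finset.mem_univ _, hi0⟩⟩
  obtain ⟨j0, hj0mem, hj0min⟩ := Finset.exists_min_image
    (Finset.univ.filter fun i : ↥(greedySet key c) => g i ≠ 0) (fun i => key ↑i) hS
  have hj0ne : g j0 ≠ 0 := (Finset.mem_filter.mp hj0mem).2
  have hsum : g j0 • c ↑j0 + ∑ i ∈ Finset.univ.erase j0, g i • c ↑i = 0 := by
    rw [← Finset.add_sum_erase _ (fun i => g i • c ↑i) (Finset.mem_univ j0)] at hg; exact hg
  have hrest : ∑ i ∈ Finset.univ.erase j0, g i • c ↑i ∈ Submodule.span 𝕂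
      (((Finset.univ.filter fun y => key ↑j0 < key y).image c : Finset (Fin k → 𝕂)) :
        Set (Fin k → 𝕂)) := by
    refine Submodule.sum_mem _ ?_
    intro i hi
    by_cases hgi : g i = 0
    · rw [hgi, zero_smul]; exact Submodule.zero_mem _
    · refine Submodule.smul_mem _ _ (Submodule.subset_span ?_)
      simp only [Finset.coe_image, Set.mem_image, Finset.mem_coe, Finset.mem_filter]
      refine ⟨↑i, ⟨Finset.mem_univ _, ?_⟩, rfl⟩
      have hle := hj0min i (Finset.mem_filter.mpr ⟨Finset.mem_univ _, hgi⟩)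
      have hne' : key (↑j0 : ι) ≠ key ↑i := by
        intro he
        exact (Finset.mem_erase.mp hi).1 (Subtype.ext (hkey he)).symm
      exact lt_of_le_of_ne hle hne'
  have hc : c ↑j0 ∈ Submodule.span 𝕂
      (((Finset.univ.filter fun y => key ↑j0 < key y).image c : Finset (Fin k → 𝕂)) :
        Set (Fin k → 𝕂)) := by
    have h3 : g j0 • c ↑j0 = -(∑ i ∈ Finset.univ.erase j0, g i • c ↑i) :=
      eq_neg_of_add_eq_zero_left hsum
    have h2 : c ↑j0 = (g j0)⁻¹ • (g j0 • c ↑j0) := by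
      rw [smul_smul, inv_mul_cancel₀ hj0ne, one_smul]
    rw [h2, h3]
    exact Submodule.smul_mem _ _ (Submodule.neg_mem _ hrest)
  exact (mem_greedySet.mp j0.2) hc

lemma greedy_filter_card_le {key : ι → ℤ} {c : ι → Fin k → 𝕂} (Y : Finset ι)
    (hY : LinearIndependent 𝕂 (fun y : ↥Y => c ↑y)) (t : ℤ) :
    (Y.filter fun y => t ≤ key y).card ≤ ((greedySet key c).filter fun y => t ≤ key y).card := by
  set Xt := (greedySet key c).filter fun y => t ≤ key y with hXt
  set W := Submodule.span 𝕂 ((Xt.image c : Finset (Fin k → 𝕂)) : Set (Fin k → 𝕂)) with hW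
  have hmemW : ∀ y ∈ Y.filter fun y => t ≤ key y, c y ∈ W := by
    intro y hy
    have hty := (Finset.mem_filter.mp hy).2
    refine SetLike.le_def.mp (Submodule.span_mono ?_) (greedySet_span key c y)
    refine Finset.coe_subset.mpr (Finset.image_subset_image ?_)
    intro z hz
    rw [Finset.mem_filter] at hz ⊢
    exact ⟨hz.1, le_trans hty hz.2⟩
  set Yt := Y.filter fun y => t ≤ key y with hYt
  have hYtind : LinearIndependent 𝕂 (fun y : ↥Yt => c ↑y) :=
    hY.comp (fun y : ↥Yt => (⟨↑y, Finset.mem_of_mem_filter _ y.2⟩ : ↥Y))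
      (by intro a b hab; simp only [Subtype.mk.injEq] at hab; exact Subtype.ext hab)
  have hWind : LinearIndependent 𝕂 (fun y : ↥Yt => (⟨c ↑y, hmemW ↑y y.2⟩ : W)) :=
    LinearIndependent.of_comp W.subtype hYtind
  have h1 : Fintype.card ↥Yt ≤ finrank 𝕂 W := hWind.fintype_card_le_finrank
  have h2 : finrank 𝕂 W ≤ Xt.card := by
    refine le_trans ?_ (Finset.card_image_le (f := c) (s := Xt))
    exact finrank_span_finset_le_card (Xt.image c)
  calc Yt.card = Fintype.card ↥Yt := (Fintype.card_coe _).symm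
    _ ≤ Xt.card := le_trans h1 h2

lemma greedySet_card {key : ι → ℤ} (hkey : Function.Injective key) {c : ι → Fin k → 𝕂}
    (hspan : Submodule.span 𝕂 (Set.range c) = ⊤) : (greedySet key c).card = k := by
  have hle : (greedySet key c).card ≤ k := by
    have h := (greedySet_indep hkey c).fintype_card_le_finrank
    rw [Fintype.card_coe] at h
    simpa [Module.finrank_pi] using h
  have htop : Submodule.span 𝕂
      (((greedySet key c).image c : Finset (Fin k → 𝕂)) : Set (Fin k → 𝕂)) = ⊤ := by
    rw [eq_top_iff, ← hspan]
    refine Submodule.span_le.mpr ?_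
    rintro v ⟨x, rfl⟩
    refine SetLike.le_def.mp (Submodule.span_mono ?_) (greedySet_span key c x)
    exact Finset.coe_subset.mpr (Finset.image_subset_image (Finset.filter_subset _ _))
  have hge : k ≤ (greedySet key c).card := by
    have h1 : finrank 𝕂 (Fin k → 𝕂) = k := by simp [Module.finrank_pi]
    calc k = finrank 𝕂 (⊤ : Submodule 𝕂 (Fin k → 𝕂)) := by rw [finrank_top, h1]
      _ = finrank 𝕂 (Submodule.span 𝕂
            (((greedySet key c).image c : Finset (Fin k → 𝕂)) : Set (Fin k → 𝕂))) := by
          rw [htop]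
      _ ≤ ((greedySet key c).image c).card := finrank_span_finset_le_card _
      _ ≤ _ := Finset.card_image_le
  omega

end Greedy

section Gale

lemma gale_exists (k : ℕ) (KY KX : Finset ℤ) (hY : KY.card = k) (hX : KX.card = k)
    (hcount : ∀ t : ℤ, (KY.filter fun s => t ≤ s).card ≤ (KX.filter fun s => t ≤ s).card) :
    ∃ g : ℤ → ℤ, Set.BijOn g ↑KY ↑KX ∧ ∀ a ∈ KY, a ≤ g a := by
  have hdom : ∀ i : Fin k, KY.orderEmbOfFin hY i ≤ KX.orderEmbOfFin hX i := by
    intro i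
    by_contra hcon
    push_neg at hcon
    set t := KY.orderEmbOfFin hY i with ht
    have h1 : k - (i : ℕ) ≤ (KY.filter fun s => t ≤ s).card := by
      have hsub : (Finset.Ici i).image (KY.orderEmbOfFin hY) ⊆ KY.filter fun s => t ≤ s := by
        intro a ha
        obtain ⟨m, hm, rfl⟩ := Finset.mem_image.mp ha
        exact Finset.mem_filter.mpr ⟨Finset.orderEmbOfFin_mem _ _ _,
          (KY.orderEmbOfFin hY).monotone (Finset.mem_Ici.mp hm)⟩
      calc k - (i : ℕ) = (Finset.Ici i).card := (Fin.card_Ici i).symm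
        _ = ((Finset.Ici i).image (KY.orderEmbOfFin hY)).card :=
            (Finset.card_image_of_injective _ (KY.orderEmbOfFin hY).injective).symm
        _ ≤ _ := Finset.card_le_card hsub
    have h2 : (KX.filter fun s => t ≤ s).card ≤ k - 1 - (i : ℕ) := by
      have hsub : (KX.filter fun s => t ≤ s) ⊆ (Finset.Ioi i).image (KX.orderEmbOfFin hX) := by
        intro a ha
        obtain ⟨hamem, hta⟩ := Finset.mem_filter.mp ha
        have : a ∈ Set.range (KX.orderEmbOfFin hX) := by
          rw [Finset.range_orderEmbOfFin]
          exact hamem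
        obtain ⟨m, hm⟩ := this
        refine Finset.mem_image.mpr ⟨m, Finset.mem_Ioi.mpr ?_, hm⟩
        have hlt : KX.orderEmbOfFin hX i < KX.orderEmbOfFin hX m :=
          lt_of_lt_of_le hcon (hm ▸ hta)
        exact (KX.orderEmbOfFin hX).lt_iff_lt.mp hlt
      calc (KX.filter fun s => t ≤ s).card
          ≤ ((Finset.Ioi i).image (KX.orderEmbOfFin hX)).card := Finset.card_le_card hsub
        _ ≤ (Finset.Ioi i).card := Finset.card_image_le
        _ = k - 1 - (i : ℕ) := Fin.card_Ioi i
    have h3 := le_trans h1 (le_trans (hcount t) h2)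
    have h4 := i.is_lt
    omega
  refine ⟨fun a => if h : a ∈ KY then
      (KX.orderEmbOfFin hX ((KY.orderIsoOfFin hY).symm ⟨a, h⟩) : ℤ) else a, ⟨?_, ?_, ?_⟩, ?_⟩
  · intro a ha
    rw [Finset.mem_coe]
    have ha' : a ∈ KY := ha
    simp only [dif_pos ha']
    exact Finset.orderEmbOfFin_mem _ _ _
  · intro a ha b hb hab
    have ha' : a ∈ KY := ha
    have hb' : b ∈ KY := hb
    simp only [dif_pos ha', dif_pos hb'] at hab
    have h1 := (KX.orderEmbOfFin hX).injective hab
    have h2 := congrArg (KY.orderIsoOfFin hY) (congrArg id h1)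
    simp only [id_eq, OrderIso.apply_symm_apply] at h2
    exact congrArg Subtype.val h2
  · intro x hx
    have hx' : x ∈ KX := hx
    have : x ∈ Set.range (KX.orderEmbOfFin hX) := by
      rw [Finset.range_orderEmbOfFin]; exact hx'
    obtain ⟨m, hm⟩ := this
    have hamem : KY.orderEmbOfFin hY m ∈ KY := Finset.orderEmbOfFin_mem _ _ _
    refine ⟨KY.orderEmbOfFin hY m, hamem, ?_⟩
    simp only [dif_pos hamem]
    have hiso : (⟨KY.orderEmbOfFin hY m, hamem⟩ : {z // z ∈ KY}) = KY.orderIsoOfFin hY m :=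
      Subtype.ext (Finset.coe_orderIsoOfFin_apply KY hY m).symm
    rw [hiso, OrderIso.symm_apply_apply]
    exact hm
  · intro a ha
    simp only [dif_pos ha]
    have hiso : a = KY.orderEmbOfFin hY ((KY.orderIsoOfFin hY).symm ⟨a, ha⟩) := by
      rw [← Finset.coe_orderIsoOfFin_apply, OrderIso.apply_symm_apply]
    calc a = KY.orderEmbOfFin hY ((KY.orderIsoOfFin hY).symm ⟨a, ha⟩) := hiso
      _ ≤ KX.orderEmbOfFin hX ((KY.orderIsoOfFin hY).symm ⟨a, ha⟩) := hdom _

end Gale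

section Admissible

open Submodule Module

lemma greedy_admissible {n k : ℕ} {𝕂 : Type*} [Field 𝕂] {A B : Matrix (Fin k) (Fin n) 𝕂}
    (hsym : (A * Bᵀ).IsSymm) {key : JJ n → ℤ} (hkey : Function.Injective key)
    (hkstar : ∀ x, key (starJ x) = -key x)
    (c : JJ n → Fin k → 𝕂)
    (hcA : ∀ (i : Fin n) (r : Fin k), c (i, false) r = A r i)
    (hcB : ∀ (i : Fin n) (r : Fin k), c (i, true) r = B r i) :
    AdmissibleSet (greedySet key c) := by
  have expand : ∀ (φ ψ : Module.Dual 𝕂 (Fin k → 𝕂)),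
      ∑ i : Fin n, φ (c (i, false)) * ψ (c (i, true)) =
      ∑ r : Fin k, ∑ s : Fin k, φ (fun j => if r = j then 1 else 0) *
        ψ (fun j => if s = j then 1 else 0) * (A * Bᵀ) r s := by
    intro φ ψ
    calc ∑ i : Fin n, φ (c (i, false)) * ψ (c (i, true))
        = ∑ i : Fin n, (∑ r : Fin k, A r i * φ (fun j => if r = j then 1 else 0)) *
            (∑ s : Fin k, B s i * ψ (fun j => if s = j then 1 else 0)) := by
          refine Finset.sum_congr rfl fun i _ => ?_
          have h1 : c (i, false) = fun r => A r i := funext fun r => hcA i r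
          have h2 : c (i, true) = fun r => B r i := funext fun r => hcB i r
          rw [h1, h2, LinearMap.pi_apply_eq_sum_univ φ, LinearMap.pi_apply_eq_sum_univ ψ]
          simp only [smul_eq_mul]
      _ = ∑ i : Fin n, ∑ r : Fin k, ∑ s : Fin k,
            (A r i * φ (fun j => if r = j then 1 else 0)) *
            (B s i * ψ (fun j => if s = j then 1 else 0)) := by
          refine Finset.sum_congr rfl fun i _ => ?_
          rw [Finset.sum_mul_sum]
      _ = ∑ r : Fin k, ∑ s : Fin k, ∑ i : Fin n,
            (A r i * φ (fun j => if r = j then 1 else 0)) *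
            (B s i * ψ (fun j => if s = j then 1 else 0)) := by
          rw [Finset.sum_comm]
          exact Finset.sum_congr rfl fun r _ => Finset.sum_comm
      _ = ∑ r : Fin k, ∑ s : Fin k, φ (fun j => if r = j then 1 else 0) *
            ψ (fun j => if s = j then 1 else 0) * (A * Bᵀ) r s := by
          refine Finset.sum_congr rfl fun r _ => Finset.sum_congr rfl fun s _ => ?_
          rw [Matrix.mul_apply, Finset.mul_sum]
          refine Finset.sum_congr rfl fun i _ => ?_
          rw [Matrix.transpose_apply]
          ring
  have key_id : ∀ (φ ψ : Module.Dual 𝕂 (Fin k → 𝕂)),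
      ∑ i : Fin n, φ (c (i, false)) * ψ (c (i, true)) =
      ∑ i : Fin n, ψ (c (i, false)) * φ (c (i, true)) := by
    intro φ ψ
    rw [expand φ ψ, expand ψ φ, Finset.sum_comm]
    refine Finset.sum_congr rfl fun s _ => Finset.sum_congr rfl fun r _ => ?_
    rw [hsym.apply s r]
    ring
  have main : ∀ j : JJ n, j ∈ greedySet key c → starJ j ∈ greedySet key c →
      key (starJ j) < key j → False := by
    intro j hj hsj hlt
    obtain ⟨φ, hφj, hφmap⟩ :=
      Submodule.exists_dual_map_eq_bot_of_notMem (mem_greedySet.mp hj) inferInstance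
    obtain ⟨ψ, hψj, hψmap⟩ :=
      Submodule.exists_dual_map_eq_bot_of_notMem (mem_greedySet.mp hsj) inferInstance
    have hφ0 : ∀ x, key j < key x → φ (c x) = 0 := by
      intro x hx
      have hmem : c x ∈ Submodule.span 𝕂
          (((Finset.univ.filter fun y => key j < key y).image c : Finset (Fin k → 𝕂)) :
            Set (Fin k → 𝕂)) :=
        Submodule.subset_span (by
          simp only [Finset.coe_image, Set.mem_image, Finset.mem_coe, Finset.mem_filter]
          exact ⟨x, ⟨Finset.mem_univ _, hx⟩, rfl⟩)
      have h2 := Submodule.mem_map_of_mem (f := φ) hmem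
      rw [hφmap] at h2
      exact (Submodule.mem_bot 𝕂).mp h2
    have hψ0 : ∀ x, key (starJ j) < key x → ψ (c x) = 0 := by
      intro x hx
      have hmem : c x ∈ Submodule.span 𝕂
          (((Finset.univ.filter fun y => key (starJ j) < key y).image c : Finset (Fin k → 𝕂)) :
            Set (Fin k → 𝕂)) :=
        Submodule.subset_span (by
          simp only [Finset.coe_image, Set.mem_image, Finset.mem_coe, Finset.mem_filter]
          exact ⟨x, ⟨Finset.mem_univ _, hx⟩, rfl⟩)
      have h2 := Submodule.mem_map_of_mem (f := ψ) hmem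
      rw [hψmap] at h2
      exact (Submodule.mem_bot 𝕂).mp h2
    have hφb : ∀ x, φ (c x) ≠ 0 → key x ≤ key j := fun x hx => not_lt.mp fun h => hx (hφ0 x h)
    have hψb : ∀ x, ψ (c x) ≠ 0 → key x ≤ key (starJ j) :=
      fun x hx => not_lt.mp fun h => hx (hψ0 x h)
    have hT0 : ∑ i : Fin n,
        (φ (c (i, false)) * ψ (c (i, true)) - ψ (c (i, false)) * φ (c (i, true))) = 0 := by
      rw [Finset.sum_sub_distrib, key_id φ ψ, sub_self]
    have hsingle : ∀ i : Fin n, i ≠ j.1 →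
        φ (c (i, false)) * ψ (c (i, true)) - ψ (c (i, false)) * φ (c (i, true)) = 0 := by
      intro i hi
      have hstar_i : starJ ((i, false) : JJ n) = (i, true) := rfl
      have e3 : key ((i, true) : JJ n) = -key ((i, false) : JJ n) := by
        rw [← hstar_i, hkstar]
      have e5 : key (starJ j) = -key j := hkstar j
      have h1 : φ (c (i, false)) * ψ (c (i, true)) = 0 := by
        by_contra hne
        have hφne : φ (c (i, false)) ≠ 0 := left_ne_zero_of_mul hne
        have hψne : ψ (c (i, true)) ≠ 0 := right_ne_zero_of_mul hne
        have e1 : key ((i, false) : JJ n) ≤ key j := hφb _ hφne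
        have e2 : key ((i, true) : JJ n) ≤ key (starJ j) := hψb _ hψne
        have e4 : key ((i, false) : JJ n) = key j := by omega
        exact hi (congrArg Prod.fst (hkey e4))
      have h2 : ψ (c (i, false)) * φ (c (i, true)) = 0 := by
        by_contra hne
        have hψne : ψ (c (i, false)) ≠ 0 := left_ne_zero_of_mul hne
        have hφne : φ (c (i, true)) ≠ 0 := right_ne_zero_of_mul hne
        have e1 : key ((i, false) : JJ n) ≤ key (starJ j) := hψb _ hψne
        have e2 : key ((i, true) : JJ n) ≤ key j := hφb _ hφne
        have e4 : key ((i, false) : JJ n) = key (starJ j) := by omega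
        have := congrArg Prod.fst (hkey e4)
        simp only [starJ] at this
        exact hi this
      rw [h1, h2, sub_zero]
    have hTne : (∑ i : Fin n,
        (φ (c (i, false)) * ψ (c (i, true)) - ψ (c (i, false)) * φ (c (i, true)))) ≠ 0 := by
      rw [Finset.sum_eq_single j.1 (fun i _ hi => hsingle i hi)
        (fun h => absurd (Finset.mem_univ _) h)]
      obtain ⟨a, b⟩ := j
      cases b
      · -- j = (a, false), starJ j = (a, true)
        have hz : ψ (c (a, false)) = 0 := hψ0 (a, false) hlt
        rw [hz, zero_mul, sub_zero]
        exact mul_ne_zero hφj hψj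
      · -- j = (a, true), starJ j = (a, false)
        have hz : ψ (c (a, true)) = 0 := hψ0 (a, true) hlt
        rw [hz, mul_zero, zero_sub, neg_ne_zero]
        exact mul_ne_zero hψj hφj
    exact hTne hT0
  intro x hx hsx
  rcases lt_trichotomy (key (starJ x)) (key x) with h | h | h
  · exact main x hx hsx h
  · have := congrArg Prod.snd (hkey h)
    simp only [starJ] at this
    exact (Bool.not_ne_self x.2) this
  · refine main (starJ x) hsx ?_ ?_
    · rw [starJ_starJ]; exact hx
    · rw [starJ_starJ]; exact h

end Admissible

/-- If `A, B` are `k × n` matrices over a field with `A·Bᵀ` symmetric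
and `C = (A, B)` of rank `k`, then the collection of admissible `k`-subsets of `J` with
nonzero `k × k` minor of `C` satisfies the Maximality Property, i.e. it is the
collection of bases of a symplectic matroid of rank `k`. -/
theorem representation_gives_symplectic_matroid {n k : ℕ} {𝕂 : Type*} [Field 𝕂]
    (A B : Matrix (Fin k) (Fin n) 𝕂)
    (hsym : (A * Bᵀ).IsSymm)
    (hrank : (Matrix.fromCols A B).rank = k)
    (ℬ : Finset (Finset (JJ n)))
    (hℬ : RepBases (Matrix.fromCols A B) ℬ) :
    IsSymplecticMatroid k ℬ := by
  classical
  set C : Matrix (Fin k) (Fin n ⊕ Fin n) 𝕂 := Matrix.fromCols A B with hC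
  set c : JJ n → Fin k → 𝕂 := fun x r => C r (toCol x) with hcdef
  have hcA : ∀ (i : Fin n) (r : Fin k), c (i, false) r = A r i := by
    intro i r; simp [hcdef, toCol, hC]
  have hcB : ∀ (i : Fin n) (r : Fin k), c (i, true) r = B r i := by
    intro i r; simp [hcdef, toCol, hC]
  have hspan : Submodule.span 𝕂 (Set.range c) = ⊤ := by
    have hr : Set.range c = Set.range Cᵀ := by
      ext v
      constructor
      · rintro ⟨x, rfl⟩
        exact ⟨toCol x, by funext r; simp [hcdef, Matrix.transpose_apply]⟩
      · rintro ⟨jc, rfl⟩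
        rcases jc with i | i
        · exact ⟨(i, false), by funext r; simp [hcdef, toCol, Matrix.transpose_apply]⟩
        · exact ⟨(i, true), by funext r; simp [hcdef, toCol, Matrix.transpose_apply]⟩
    rw [hr]
    have h2 := C.rank_eq_finrank_span_cols
    rw [hrank] at h2
    apply Submodule.eq_top_of_finrank_eq
    rw [show Set.range Cᵀ = Set.range C.col from rfl, ← h2]
    simp [Module.finrank_pi]
  constructor
  · intro X hX
    exact ⟨((hℬ X).mp hX).1, ((hℬ X).mp hX).2.1⟩
  intro w hw
  set key : JJ n → ℤ := fun x => ordJ (w.symm x) with hkeydef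
  have hkey : Function.Injective key := by
    intro a b h
    simp only [hkeydef] at h
    exact w.symm.injective (ordJ_injective h)
  have hwsymm : ∀ x, w.symm (starJ x) = starJ (w.symm x) := by
    intro x
    have h2 := hw (w.symm x)
    rw [Equiv.apply_symm_apply] at h2
    rw [Equiv.symm_apply_eq, h2]
  have hkstar : ∀ x, key (starJ x) = -key x := by
    intro x
    simp only [hkeydef]
    rw [hwsymm, ordJ_starJ]
  set Xg := greedySet key c with hXg
  have hcard : Xg.card = k := greedySet_card hkey hspan
  have hadm : AdmissibleSet Xg := greedy_admissible hsym hkey hkstar c hcA hcB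
  have hindep : LinearIndependent 𝕂 (fun x : ↥Xg => c ↑x) := greedySet_indep hkey c
  have hXmem : Xg ∈ ℬ := by
    refine (hℬ Xg).mpr ⟨hadm, hcard, ?_⟩
    have hcard' : Fintype.card ↥Xg = k := by rw [Fintype.card_coe]; exact hcard
    set ee := Fintype.equivFinOfCardEq hcard' with hee
    refine ⟨fun i => ↑(ee.symm i), ?_, ?_, ?_⟩
    · intro a b hab
      exact ee.symm.injective (Subtype.coe_injective hab)
    · ext x
      simp only [Finset.mem_image, Finset.mem_univ, true_and]
      constructor
      · rintro ⟨i, -, rfl⟩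
        exact (ee.symm i).2
      · intro hx
        exact ⟨ee ⟨x, hx⟩, by simp⟩
    · have hdetcrit : ∀ M : Matrix (Fin k) (Fin k) 𝕂,
          LinearIndependent 𝕂 (fun i : Fin k => Mᵀ i) → M.det ≠ 0 := by
        intro M hind
        have hU := Matrix.linearIndependent_cols_iff_isUnit.mp hind
        exact ((Matrix.isUnit_iff_isUnit_det M).mp hU).ne_zero
      refine hdetcrit _ ?_
      have h1 : (fun i : Fin k => (C.submatrix id fun i => toCol ((ee.symm i : JJ n)))ᵀ i)
          = (fun x : ↥Xg => c ↑x) ∘ ee.symm := by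
        funext i
        funext r
        simp [hcdef, Matrix.transpose_apply, Matrix.submatrix_apply]
      rw [h1]
      exact hindep.comp _ ee.symm.injective
  refine ⟨Xg, hXmem, ?_⟩
  intro Y hY
  obtain ⟨hYadm, hYcard, e, einj, himg, hdet0⟩ := (hℬ Y).mp hY
  have hYcols : LinearIndependent 𝕂 (fun i : Fin k => c (e i)) := by
    have hU : IsUnit (C.submatrix id fun i => toCol (e i)) :=
      (Matrix.isUnit_iff_isUnit_det _).mpr (isUnit_iff_ne_zero.mpr hdet0)
    have h2 := Matrix.linearIndependent_cols_iff_isUnit.mpr hU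
    have h3 : (fun i : Fin k => (C.submatrix id fun i => toCol (e i))ᵀ i)
        = fun i : Fin k => c (e i) := by
      funext i
      funext r
      simp [hcdef, Matrix.transpose_apply, Matrix.submatrix_apply]
    rwa [show (C.submatrix id fun i => toCol (e i)).col
        = fun i : Fin k => (C.submatrix id fun i => toCol (e i))ᵀ i from rfl, h3] at h2
  have heY : ∀ i, e i ∈ Y := fun i => by
    rw [← himg]; exact Finset.mem_image_of_mem e (Finset.mem_univ i)
  have heebij : Function.Bijective (fun i : Fin k => (⟨e i, heY i⟩ : ↥Y)) := by
    constructor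
    · intro a b hab
      apply einj
      have := congrArg Subtype.val hab
      simpa using this
    · rintro ⟨y, hy⟩
      rw [← himg] at hy
      obtain ⟨i, -, hi⟩ := Finset.mem_image.mp hy
      exact ⟨i, Subtype.ext hi⟩
  set eee := Equiv.ofBijective _ heebij with heee
  have hYind : LinearIndependent 𝕂 (fun y : ↥Y => c ↑y) := by
    have h1 := hYcols.comp eee.symm eee.symm.injective
    have h2 : ((fun i : Fin k => c (e i)) ∘ eee.symm) = fun y : ↥Y => c ↑y := by
      funext y
      have h4 : e (eee.symm y) = ↑y := congrArg Subtype.val (eee.apply_symm_apply y)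
      simp only [Function.comp_apply, h4]
    rwa [h2] at h1
  have hcount : ∀ t : ℤ, ((Y.image key).filter fun s' => t ≤ s').card ≤
      ((Xg.image key).filter fun s' => t ≤ s').card := by
    intro t
    rw [Finset.filter_image, Finset.filter_image,
      Finset.card_image_of_injective _ hkey, Finset.card_image_of_injective _ hkey]
    exact greedy_filter_card_le Y hYind t
  obtain ⟨g, hgbij, hgle⟩ := gale_exists k (Y.image key) (Xg.image key)
    (by rw [Finset.card_image_of_injective _ hkey, hYcard])
    (by rw [Finset.card_image_of_injective _ hkey, hcard]) hcount
  have hf0 : ∀ y ∈ Y, ∃ x, x ∈ Xg ∧ key x = g (key y) := by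
    intro y hy
    have h1 : key y ∈ Y.image key := Finset.mem_image_of_mem key hy
    have h2 : g (key y) ∈ (Xg.image key : Finset ℤ) := hgbij.1 h1
    obtain ⟨x, hx, hkx⟩ := Finset.mem_image.mp h2
    exact ⟨x, hx, hkx⟩
  refine ⟨fun y => if h : y ∈ Y then Classical.choose (hf0 y h) else y, ⟨?_, ?_, ?_⟩, ?_⟩
  · intro y hy
    have hy' : y ∈ Y := hy
    simp only [dif_pos hy']
    exact (Classical.choose_spec (hf0 y hy')).1
  · intro y1 hy1 y2 hy2 heq
    have hy1' : y1 ∈ Y := hy1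
    have hy2' : y2 ∈ Y := hy2
    simp only [dif_pos hy1', dif_pos hy2'] at heq
    have hk1 := (Classical.choose_spec (hf0 y1 hy1')).2
    have hk2 := (Classical.choose_spec (hf0 y2 hy2')).2
    have hgg : g (key y1) = g (key y2) := by rw [← hk1, ← hk2, heq]
    have h5 := hgbij.2.1 (Finset.mem_coe.mpr (Finset.mem_image_of_mem key hy1'))
      (Finset.mem_coe.mpr (Finset.mem_image_of_mem key hy2')) hgg
    exact hkey h5
  · intro x hx
    have hx' : x ∈ Xg := hx
    have h1 : key x ∈ (Xg.image key : Finset ℤ) := Finset.mem_image_of_mem key hx'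
    obtain ⟨s', hs', hgs⟩ := hgbij.2.2 (Finset.mem_coe.mpr h1)
    have hs'' : s' ∈ Y.image key := hs'
    obtain ⟨y, hy, rfl⟩ := Finset.mem_image.mp hs''
    refine ⟨y, hy, ?_⟩
    simp only [dif_pos hy]
    have hk := (Classical.choose_spec (hf0 y hy)).2
    apply hkey
    rw [hk, hgs]
  · intro a ha
    have ha' : a ∈ Y := ha
    simp only [dif_pos ha']
    have hk := (Classical.choose_spec (hf0 a ha')).2
    have h1 : key a ≤ key (Classical.choose (hf0 a ha')) := by
      rw [hk]; exact hgle (key a) (Finset.mem_image_of_mem key ha')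
    simp only [hkeydef] at h1
    exact h1
end

section
/- Let M be a Lagrangian matroid with basis collection ℬ and matroid polytope P. Two bases A, B ∈ ℬ are adjacent vertices of P (equivalently, there exists a linear functional on ℝ^n taking equal maximal values at e_A and e_B and strictly smaller values at all other vertices of P) if and only if either (1) A = B △ {i,i*} for some i ∈ J (a short exchange), or (2) A = B △ {i,i*,j,j*} with i ∉ {j,j*} (a long exchange) and at most one of the two sets B △ {i,i*} and B △ {j,j*} belongs to ℬ. -/
open Finset Matrix
open scoped Classical

/-- The vector `e_j ∈ ℝ^n` for `j ∈ J`: `e_i` for unstarred `i`, `-e_i` for starred. -/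
def eVec {n : ℕ} (x : JJ n) : Fin n → ℝ :=
  fun i => if i = x.1 then (if x.2 then -1 else 1) else 0

/-- The point `e_A = Σ_{j ∈ A} e_j ∈ ℝ^n` associated to an admissible set `A`. -/
def eSet {n : ℕ} (A : Finset (JJ n)) : Fin n → ℝ := ∑ x ∈ A, eVec x

/-- The matroid polytope: the convex hull of the points `e_A`, `A ∈ ℬ`. -/
def matroidPolytope {n : ℕ} (ℬ : Finset (Finset (JJ n))) : Set (Fin n → ℝ) :=
  convexHull ℝ (eSet '' ↑ℬ)

/-- Bases `A` and `B` are joined by an edge of the matroid polytope: there is a linear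
functional taking equal maximal values at `e_A`, `e_B` and strictly smaller values at
all other vertices. -/
def IsEdge {n : ℕ} (ℬ : Finset (Finset (JJ n))) (A B : Finset (JJ n)) : Prop :=
  A ∈ ℬ ∧ B ∈ ℬ ∧ A ≠ B ∧
  ∃ L : (Fin n → ℝ) →ₗ[ℝ] ℝ, L (eSet A) = L (eSet B) ∧
    ∀ C ∈ ℬ, C ≠ A → C ≠ B → L (eSet C) < L (eSet A)

/-- The height of `A` relative to the fundamental basis `F`: `h(A) = n - |A ∩ F|`. -/
def heightF {n : ℕ} (F A : Finset (JJ n)) : ℕ := n - (A ∩ F).card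

/-- A short edge: an edge whose ends are related by a short exchange `A = B ∆ {i,i*}`. -/
def IsShortEdge {n : ℕ} (ℬ : Finset (Finset (JJ n))) (A B : Finset (JJ n)) : Prop :=
  IsEdge ℬ A B ∧ ∃ i : JJ n, symmDiff A B = ({i, starJ i} : Finset (JJ n))

/-- A long edge: an edge whose ends are related by a long exchange
`A = B ∆ {i,i*,j,j*}`, `i ∉ {j,j*}`. -/
def IsLongEdge {n : ℕ} (ℬ : Finset (Finset (JJ n))) (A B : Finset (JJ n)) : Prop :=
  IsEdge ℬ A B ∧ ∃ i j : JJ n, i ≠ j ∧ i ≠ starJ j ∧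
    symmDiff A B = ({i, starJ i, j, starJ j} : Finset (JJ n))

/-- The four bases of a 2-dimensional face of the matroid polytope which is a square
with short edges (type sSquare): `A`, `A ∆ {i,i*}`, `A ∆ {j,j*}`, `A ∆ {i,i*,j,j*}`,
all of them bases. -/
def ShortSquare {n : ℕ} (ℬ : Finset (Finset (JJ n))) (v : Fin 4 → Finset (JJ n)) : Prop :=
  ∃ (A : Finset (JJ n)) (i j : JJ n), i.1 ≠ j.1 ∧
    v 0 = A ∧ v 1 = symmDiff A ({i, starJ i} : Finset (JJ n)) ∧
    v 2 = symmDiff A ({j, starJ j} : Finset (JJ n)) ∧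
    v 3 = symmDiff A ({i, starJ i, j, starJ j} : Finset (JJ n)) ∧
    ∀ k : Fin 4, v k ∈ ℬ

/-- `sF` is an orientation of the Lagrangian matroid with bases `ℬ` relative to the
fundamental basis `F`: it takes values `±1` on bases and satisfies axioms (i)–(iv). -/
def IsOrientationRel {n : ℕ} (ℬ : Finset (Finset (JJ n))) (F : Finset (JJ n))
    (sF : Finset (JJ n) → ℤ) : Prop :=
  (∀ A ∈ ℬ, sF A = 1 ∨ sF A = -1) ∧
  (∀ A B : Finset (JJ n), IsLongEdge ℬ A B → heightF F A = heightF F B → sF A = sF B) ∧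
  (∀ A B : Finset (JJ n), IsLongEdge ℬ A B → heightF F A ≠ heightF F B → sF A = -sF B) ∧
  (∀ v : Fin 4 → Finset (JJ n), ShortSquare ℬ v →
    ∀ k : Fin 4,
      ((∀ l m : Fin 4, l ≠ k → m ≠ k → sF (v l) = sF (v m)) ∧
        ∃ l : Fin 4, l ≠ k ∧ sF (v l) ≠ sF (v k)) →
      (∀ l : Fin 4, heightF F (v l) ≤ heightF F (v k)) ∨
      (∀ l : Fin 4, heightF F (v k) ≤ heightF F (v l))) ∧
  sF F = 1

/-- `(ℬ, s)` is an oriented Lagrangian matroid: `s` vanishes when an argument is not a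
basis, each `s G` is an orientation relative to `G`, and the change-of-fundamental-basis
rule holds. -/
def IsOrientation {n : ℕ} (ℬ : Finset (Finset (JJ n)))
    (s : Finset (JJ n) → Finset (JJ n) → ℤ) : Prop :=
  (∀ G A : Finset (JJ n), G ∉ ℬ ∨ A ∉ ℬ → s G A = 0) ∧
  (∀ G ∈ ℬ, IsOrientationRel ℬ G (s G)) ∧
  (∀ G ∈ ℬ, ∀ H ∈ ℬ, ∀ A ∈ ℬ, s G A = s H A * s H G * (-1) ^ ((G \ (H ∪ A)).card))

-- ================= auxiliary development =================

/-- The transversal finset associated to a sign function. -/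
def setOfSign {n : ℕ} (s : Fin n → Bool) : Finset (JJ n) :=
  Finset.univ.image fun i => (i, s i)

/-- One-coordinate flip of a sign function. -/
def flipS {n : ℕ} (s : Fin n → Bool) (q : Fin n) : Fin n → Bool :=
  Function.update s q (!s q)

lemma mem_setOfSign {n : ℕ} {s : Fin n → Bool} {x : JJ n} :
    x ∈ setOfSign s ↔ x.2 = s x.1 := by
  obtain ⟨i, b⟩ := x
  simp only [setOfSign, Finset.mem_image, Finset.mem_univ, true_and]
  constructor
  · rintro ⟨j, hj⟩; obtain ⟨rfl, rfl⟩ := Prod.mk.injEq .. ▸ hj; simp_all [Prod.ext_iff]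
  · rintro rfl; exact ⟨i, rfl⟩

lemma setOfSign_injOn {n : ℕ} {s t : Fin n → Bool} (h : setOfSign s = setOfSign t) : s = t := by
  funext i
  have : (i, s i) ∈ setOfSign t := h ▸ mem_setOfSign.2 rfl
  exact (mem_setOfSign.1 this)

lemma setOfSign_ne {n : ℕ} {s t : Fin n → Bool} {i : Fin n} (h : s i ≠ t i) :
    setOfSign s ≠ setOfSign t := fun he => h (congrFun (setOfSign_injOn he) i)

lemma card_setOfSign {n : ℕ} (s : Fin n → Bool) : (setOfSign s).card = n := by
  rw [setOfSign, Finset.card_image_of_injective _ (fun a b hab => (Prod.ext_iff.1 hab).1),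
    Finset.card_univ, Fintype.card_fin]

/-- Every basis of a Lagrangian matroid is a transversal. -/
lemma basis_eq_setOfSign {n : ℕ} {A : Finset (JJ n)}
    (hadm : AdmissibleSet A) (hcard : A.card = n) :
    A = setOfSign (fun i => decide ((i, true) ∈ A)) := by
  set s : Fin n → Bool := fun i => decide ((i, true) ∈ A) with hs
  have hinj : Set.InjOn Prod.fst (A : Set (JJ n)) := by
    intro x hx y hy hxy
    by_contra hne
    have h2 : y.2 = !x.2 := by
      rcases Bool.eq_false_or_eq_true x.2 with h | h <;>
        rcases Bool.eq_false_or_eq_true y.2 with h' | h' <;>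
          simp_all [Prod.ext_iff]
    have : y = starJ x := by simp [starJ, Prod.ext_iff, hxy.symm, h2]
    exact hadm x hx (this ▸ hy)
  -- the image of fst is all of Fin n
  have himg : A.image Prod.fst = Finset.univ := by
    apply Finset.eq_univ_of_card
    rw [Finset.card_image_of_injOn hinj, hcard]
    simp
  apply Finset.eq_of_subset_of_card_le ?_ ?_ |>.symm
  · intro x hx
    obtain ⟨i, b⟩ := x
    have hb : b = s i := mem_setOfSign.1 hx
    have : i ∈ A.image Prod.fst := himg ▸ Finset.mem_univ i
    obtain ⟨⟨i', b'⟩, hy, hyi⟩ := Finset.mem_image.1 this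
    have hii : i' = i := hyi
    subst hii
    by_cases ht : ((i', true) : JJ n) ∈ A
    · have : b = true := by simp [hb, hs, ht]
      exact this ▸ ht
    · have hb' : b' = false := by
        cases b' with
        | false => rfl
        | true => exact absurd hy ht
      have : b = false := by simp [hb, hs, ht]
      exact this ▸ hb' ▸ hy
  · rw [hcard, card_setOfSign]

lemma eVec_star {n : ℕ} (x : JJ n) : eVec (starJ x) = -eVec x := by
  funext j
  obtain ⟨i, b⟩ := x
  cases b <;> simp [eVec, starJ] <;> split <;> norm_num

lemma L_eSet {n : ℕ} (L : (Fin n → ℝ) →ₗ[ℝ] ℝ) (s : Fin n → Bool) :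
    L (eSet (setOfSign s)) = ∑ i, L (eVec (i, s i)) := by
  rw [eSet, map_sum, setOfSign,
    Finset.sum_image (fun a _ b _ hab => (Prod.ext_iff.1 hab).1)]

lemma L_eVec_not {n : ℕ} (L : (Fin n → ℝ) →ₗ[ℝ] ℝ) (i : Fin n) (b : Bool) :
    L (eVec (i, !b)) = -L (eVec (i, b)) := by
  have : eVec (i, !b) = -eVec (i, b) := eVec_star (⟨i, b⟩ : JJ n)
  rw [this, map_neg]

lemma L_flip {n : ℕ} (L : (Fin n → ℝ) →ₗ[ℝ] ℝ) (s : Fin n → Bool) (q : Fin n) :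
    L (eSet (setOfSign (flipS s q))) = L (eSet (setOfSign s)) - 2 * L (eVec (q, s q)) := by
  rw [L_eSet, L_eSet]
  rw [← Finset.add_sum_erase _ (fun i => L (eVec (i, flipS s q i))) (Finset.mem_univ q),
    ← Finset.add_sum_erase _ (fun i => L (eVec (i, s i))) (Finset.mem_univ q)]
  have h1 : ∑ i ∈ Finset.univ.erase q, L (eVec (i, flipS s q i))
      = ∑ i ∈ Finset.univ.erase q, L (eVec (i, s i)) := by
    apply Finset.sum_congr rfl
    intro i hi
    rw [flipS, Function.update_of_ne (Finset.mem_erase.1 hi).1]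
  rw [h1]
  have h2 : flipS s q q = !s q := by simp [flipS]
  rw [h2, L_eVec_not]
  ring

-- ============ symmDiff lemmas ============

def pairP {n : ℕ} (q : Fin n) : Finset (JJ n) := {(q, false), (q, true)}

lemma mem_pairP {n : ℕ} {q : Fin n} {x : JJ n} : x ∈ pairP q ↔ x.1 = q := by
  obtain ⟨i, b⟩ := x
  cases b <;> simp [pairP, Prod.ext_iff]

lemma pair_star_eq_pairP {n : ℕ} (x : JJ n) :
    ({x, starJ x} : Finset (JJ n)) = pairP x.1 := by
  ext y
  simp only [Finset.mem_insert, Finset.mem_singleton, mem_pairP]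
  obtain ⟨i, b⟩ := x; obtain ⟨j, c⟩ := y
  cases b <;> cases c <;> simp [starJ, Prod.ext_iff] <;> tauto

lemma quad_star_eq {n : ℕ} (x y : JJ n) (h : x.1 ≠ y.1) :
    ({x, starJ x, y, starJ y} : Finset (JJ n)) = pairP x.1 ∪ pairP y.1 := by
  ext z
  simp only [Finset.mem_insert, Finset.mem_singleton, Finset.mem_union, mem_pairP]
  obtain ⟨i, b⟩ := x; obtain ⟨j, c⟩ := y; obtain ⟨k, d⟩ := z
  cases b <;> cases c <;> cases d <;> simp_all [starJ, Prod.ext_iff] <;> tauto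

lemma symmDiff_pairP {n : ℕ} (s : Fin n → Bool) (q : Fin n) :
    symmDiff (setOfSign s) (pairP q) = setOfSign (flipS s q) := by
  ext x
  obtain ⟨i, b⟩ := x
  rw [Finset.mem_symmDiff]
  by_cases hiq : i = q
  · subst hiq
    simp only [mem_setOfSign, mem_pairP, flipS, Function.update_self]
    cases hb : s i <;> cases b <;> simp_all
  · simp only [mem_setOfSign, mem_pairP, flipS, Function.update_of_ne hiq]
    simp [hiq]

lemma disjoint_pairP {n : ℕ} {q₁ q₂ : Fin n} (h : q₁ ≠ q₂) :
    Disjoint (pairP q₁) (pairP q₂) := by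
  rw [Finset.disjoint_left]
  intro x h1 h2
  exact h ((mem_pairP.1 h1).symm.trans (mem_pairP.1 h2))

lemma symmDiff_pairP2 {n : ℕ} (s : Fin n → Bool) {q₁ q₂ : Fin n} (h : q₁ ≠ q₂) :
    symmDiff (setOfSign s) (pairP q₁ ∪ pairP q₂) = setOfSign (flipS (flipS s q₁) q₂) := by
  have hd : symmDiff (pairP q₁) (pairP q₂) = pairP q₁ ∪ pairP q₂ :=
    (disjoint_pairP h).symmDiff_eq_sup
  rw [← hd, ← symmDiff_assoc, symmDiff_pairP, symmDiff_pairP]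

-- ============ linear functionals ============

def linFun {n : ℕ} (c : Fin n → ℝ) : (Fin n → ℝ) →ₗ[ℝ] ℝ where
  toFun := fun v => ∑ i, c i * v i
  map_add' := by intro v w; simp [mul_add, Finset.sum_add_distrib]
  map_smul' := by
    intro a v
    simp only [Pi.smul_apply, smul_eq_mul, RingHom.id_apply, Finset.mul_sum]
    apply Finset.sum_congr rfl
    intros; ring

lemma linFun_eVec {n : ℕ} (c : Fin n → ℝ) (i : Fin n) (b : Bool) :
    linFun c (eVec (i, b)) = (if b then -1 else 1) * c i := by
  show (∑ j, c j * eVec (i, b) j) = _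
  rw [Finset.sum_eq_single i]
  · simp only [eVec, if_true, eq_self_iff_true]
    rw [mul_comm]
  · intro j _ hj
    simp [eVec, hj, Ne.symm hj]
  · simp

def sg (b : Bool) : ℝ := if b then -1 else 1

lemma linFun_eSet {n : ℕ} (c : Fin n → ℝ) (s : Fin n → Bool) :
    linFun c (eSet (setOfSign s)) = ∑ i, sg (s i) * c i := by
  rw [L_eSet]
  exact Finset.sum_congr rfl fun i _ => linFun_eVec c i (s i)

lemma sg_mul_self (b : Bool) : sg b * sg b = 1 := by cases b <;> norm_num [sg]
lemma sg_not (b : Bool) : sg (!b) = -sg b := by cases b <;> norm_num [sg]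

-- ============ Gale-order counting ============

lemma card_filter_le_of_setLE {n : ℕ} {w : Equiv.Perm (JJ n)} {A M : Finset (JJ n)}
    (h : setLE w A M) (z : ℤ) :
    (A.filter fun x => z ≤ ordJ (w.symm x)).card ≤
      (M.filter fun x => z ≤ ordJ (w.symm x)).card := by
  obtain ⟨f, hbij, hmono⟩ := h
  apply Finset.card_le_card_of_injOn f
  · intro a ha
    rw [Finset.mem_coe, Finset.mem_filter] at ha ⊢
    exact ⟨hbij.mapsTo ha.1, le_trans ha.2 (hmono a ha.1)⟩
  · intro a ha b hb hab
    exact hbij.injOn (Finset.mem_coe.2 (Finset.filter_subset _ _ ha))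
      (Finset.mem_coe.2 (Finset.filter_subset _ _ hb)) hab

lemma card_filter_setOfSign {n : ℕ} (u : Fin n → Bool) (Q : JJ n → Prop) [DecidablePred Q] :
    ((setOfSign u).filter Q).card = (Finset.univ.filter fun i => Q (i, u i)).card := by
  have : (setOfSign u).filter Q
      = Finset.image (fun i => (i, u i)) (Finset.univ.filter fun i => Q (i, u i)) := by
    ext x
    obtain ⟨i, b⟩ := x
    simp only [Finset.mem_filter, mem_setOfSign, Finset.mem_image, Finset.mem_univ, true_and]
    constructor
    · rintro ⟨rfl, h⟩
      exact ⟨i, h, rfl⟩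
    · rintro ⟨j, hj, he⟩
      have h1 : j = i := (Prod.ext_iff.1 he).1
      subst h1
      have h2 : u j = b := (Prod.ext_iff.1 he).2
      subst h2
      exact ⟨rfl, hj⟩
  rw [this, Finset.card_image_of_injective _ (fun a b hab => (Prod.ext_iff.1 hab).1)]

-- ============ the symmetric exchange lemma ============

lemma bool_xor_false {a b : Bool} (h : xor a b = false) : a = b := by
  cases a <;> cases b <;> simp_all

lemma bool_xor_true {a b : Bool} (h : xor a b = true) : a ≠ b := by
  cases a <;> cases b <;> simp_all

lemma bool_ne_not {a b : Bool} (h : a ≠ b) : b = !a := by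
  cases a <;> cases b <;> simp_all


set_option maxHeartbeats 1000000 in
lemma exchange {n : ℕ} {ℬ : Finset (Finset (JJ n))} (hM : IsLagrangianMatroid ℬ)
    {s t : Fin n → Bool} (hs : setOfSign s ∈ ℬ) (ht : setOfSign t ∈ ℬ)
    {p : Fin n} (hp : s p ≠ t p) :
    ∃ u : Fin n → Bool, setOfSign u ∈ ℬ ∧
      (u = flipS s p ∨ ∃ r : Fin n, r ≠ p ∧ s r ≠ t r ∧ u = flipS (flipS s p) r) := by
  classical
  set D : Finset (Fin n) := Finset.univ.filter (fun i => s i ≠ t i) with hD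
  have hpD : p ∈ D := by simp [hD, hp]
  set m : ℕ := D.card with hmdef
  have hm1 : 1 ≤ m := Finset.card_pos.2 ⟨p, hpD⟩
  have hmn : m ≤ n := by
    have := Finset.card_le_univ D
    simpa using this
  set T : Finset (Fin n) := D.erase p with hTdef
  have hT : T.card = m - 1 := by rw [hTdef, Finset.card_erase_of_mem hpD]
  have hC : Dᶜ.card = n - m := by rw [Finset.card_compl]; simp [hmdef]
  have hTD : T ⊆ D := Finset.erase_subset _ _
  set eT := T.equivFin with heT
  set eC := Dᶜ.equivFin with heC
  have memC : ∀ j : Fin n, j ∉ T → j ≠ p → j ∈ Dᶜ := by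
    intro j hj hjp
    simp only [Finset.mem_compl]
    intro hDj
    exact hj (Finset.mem_erase.2 ⟨hjp, hDj⟩)
  -- the rank function
  set ψ : Fin n → Fin n := fun j =>
    if hj : j ∈ T then ⟨(eT ⟨j, hj⟩ : ℕ), by have := (eT ⟨j, hj⟩).2; omega⟩
    else if hjp : j = p then ⟨m - 1, by omega⟩
    else ⟨m + (eC ⟨j, memC j hj hjp⟩ : ℕ), by
      have := (eC ⟨j, memC j hj hjp⟩).2
      omega⟩ with hψ
  have hψT : ∀ j (hj : j ∈ T), ((ψ j : ℕ)) < m - 1 := by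
    intro j hj
    simp only [hψ, dif_pos hj]
    have := (eT ⟨j, hj⟩).2
    omega
  have hpT : p ∉ T := Finset.notMem_erase _ _
  have hψp : (ψ p : ℕ) = m - 1 := by
    simp only [hψ, dif_neg hpT, dif_pos rfl]
    simp
  have hψC : ∀ j, j ∉ D → m ≤ (ψ j : ℕ) := by
    intro j hjD
    have hjT : j ∉ T := fun hjT => hjD (hTD hjT)
    have hjp : j ≠ p := fun h => hjD (h ▸ hpD)
    simp only [hψ, dif_neg hjT, dif_neg hjp]
    exact Nat.le_add_right _ _
  have hinj : Function.Injective ψ := by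
    intro j j' h
    have hval : (ψ j : ℕ) = (ψ j' : ℕ) := congrArg Fin.val h
    by_cases hj : j ∈ T <;> by_cases hj' : j' ∈ T
    · simp only [hψ, dif_pos hj, dif_pos hj'] at hval
      have : eT ⟨j, hj⟩ = eT ⟨j', hj'⟩ := Fin.ext hval
      exact Subtype.ext_iff.1 (eT.injective this)
    · exfalso
      by_cases hj'p : j' = p
      · subst hj'p
        have := hψT j hj; rw [hval, hψp] at this; omega
      · have h1 := hψT j hj
        have h2 := hψC j' (fun hd => hj' (Finset.mem_erase.2 ⟨hj'p, hd⟩))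
        omega
    · exfalso
      by_cases hjp : j = p
      · subst hjp
        have := hψT j' hj'; rw [← hval, hψp] at this; omega
      · have h1 := hψT j' hj'
        have h2 := hψC j (fun hd => hj (Finset.mem_erase.2 ⟨hjp, hd⟩))
        omega
    · by_cases hjp : j = p <;> by_cases hj'p : j' = p
      · exact hjp.trans hj'p.symm
      · exfalso
        have h2 := hψC j' (fun hd => hj' (Finset.mem_erase.2 ⟨hj'p, hd⟩))
        rw [hjp] at hval
        rw [hψp] at hval
        omega
      · exfalso
        have h2 := hψC j (fun hd => hj (Finset.mem_erase.2 ⟨hjp, hd⟩))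
        rw [hj'p] at hval
        rw [hψp] at hval
        omega
      · have hjc : j ∈ Dᶜ := by
          simp only [Finset.mem_compl]; intro hd; exact hj (Finset.mem_erase.2 ⟨hjp, hd⟩)
        have hj'c : j' ∈ Dᶜ := by
          simp only [Finset.mem_compl]; intro hd; exact hj' (Finset.mem_erase.2 ⟨hj'p, hd⟩)
        simp only [hψ, dif_neg hj, dif_neg hj', dif_neg hjp, dif_neg hj'p] at hval
        have : eC ⟨j, hjc⟩ = eC ⟨j', hj'c⟩ := Fin.ext (by omega)
        exact Subtype.ext_iff.1 (eC.injective this)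
  set e : Equiv.Perm (Fin n) := Equiv.ofBijective ψ (Finite.injective_iff_bijective.1 hinj)
    with hedef
  have he : ∀ j, e j = ψ j := fun j => rfl
  set σ : Fin n → Bool := flipS s p with hσ
  -- the admissible permutation
  set w : Equiv.Perm (JJ n) :=
    { toFun := fun x => (e.symm x.1, xor x.2 (σ (e.symm x.1)))
      invFun := fun y => (e y.1, xor y.2 (σ y.1))
      left_inv := by
        intro x
        obtain ⟨i, b⟩ := x
        simp [Bool.xor_assoc]
      right_inv := by
        intro y
        obtain ⟨j, c⟩ := y
        simp [Bool.xor_assoc] } with hwdef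
  have hw : AdmissiblePerm w := by
    intro x
    obtain ⟨i, b⟩ := x
    show ((e.symm i, xor (!b) (σ (e.symm i))) : JJ n) = starJ (e.symm i, xor b (σ (e.symm i)))
    rw [starJ]
    refine Prod.ext rfl ?_
    cases b <;> cases (σ (e.symm i)) <;> rfl
  have hwsymm : ∀ (i : Fin n) (b : Bool), w.symm (i, b) = (e i, xor b (σ i)) := fun _ _ => rfl
  -- value computation
  have hvv : ∀ (i : Fin n) (b : Bool), ordJ (w.symm (i, b)) =
      if xor b (σ i) then -(((ψ i : ℕ) : ℤ) + 1) else (((ψ i : ℕ) : ℤ) + 1) := by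
    intro i b
    rw [hwsymm, ordJ, he]
  -- the three filter characterizations, for any sign function v
  have hchar1 : ∀ v : Fin n → Bool,
      (Finset.univ.filter fun i => ((m : ℤ) + 1) ≤ ordJ (w.symm (i, v i)))
        = Finset.univ.filter fun i => v i = σ i ∧ i ∉ D := by
    intro v
    apply Finset.filter_congr
    intro i _
    rw [hvv]
    cases hx : xor (v i) (σ i) with
    | true =>
      rw [if_pos rfl]
      have hne : ¬ (v i = σ i) := bool_xor_true hx
      constructor
      · intro h; omega
      · intro h; exact absurd h.1 hne
    | false =>
      have heq : v i = σ i := bool_xor_false hx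
      rw [if_neg Bool.false_ne_true]
      constructor
      · intro h
        refine ⟨heq, fun hiD => ?_⟩
        by_cases hip : i = p
        · subst hip; rw [hψp] at h; omega
        · have := hψT i (Finset.mem_erase.2 ⟨hip, hiD⟩); omega
      · intro h
        have := hψC i h.2
        omega
  have hchar2 : ∀ v : Fin n → Bool,
      (Finset.univ.filter fun i => (m : ℤ) ≤ ordJ (w.symm (i, v i)))
        = Finset.univ.filter fun i => v i = σ i ∧ (i ∉ D ∨ i = p) := by
    intro v
    apply Finset.filter_congr
    intro i _
    rw [hvv]
    cases hx : xor (v i) (σ i) with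
    | true =>
      rw [if_pos rfl]
      have hne : ¬ (v i = σ i) := bool_xor_true hx
      constructor
      · intro h; omega
      · intro h; exact absurd h.1 hne
    | false =>
      have heq : v i = σ i := bool_xor_false hx
      rw [if_neg Bool.false_ne_true]
      constructor
      · intro h
        refine ⟨heq, ?_⟩
        by_cases hip : i = p
        · exact Or.inr hip
        · left
          intro hiD
          have := hψT i (Finset.mem_erase.2 ⟨hip, hiD⟩)
          omega
      · rintro ⟨-, h | h⟩
        · have := hψC i h; omega
        · subst h; rw [hψp]; omega
  have hchar3 : ∀ v : Fin n → Bool,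
      (Finset.univ.filter fun i => (1 : ℤ) ≤ ordJ (w.symm (i, v i)))
        = Finset.univ.filter fun i => v i = σ i := by
    intro v
    apply Finset.filter_congr
    intro i _
    rw [hvv]
    cases hx : xor (v i) (σ i) with
    | true =>
      rw [if_pos rfl]
      have hne : ¬ (v i = σ i) := bool_xor_true hx
      constructor
      · intro h; omega
      · intro h; exact absurd h hne
    | false =>
      have heq : v i = σ i := bool_xor_false hx
      rw [if_neg Bool.false_ne_true]
      constructor
      · intro _; exact heq
      · intro _; omega
  -- get the Gale-maximal basis M
  obtain ⟨M, hMB, hmax⟩ := hM.2 w hw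
  obtain ⟨hMadm, hMcard⟩ := hM.1 M hMB
  have hMeq := basis_eq_setOfSign hMadm hMcard
  set u : Fin n → Bool := fun i => decide ((i, true) ∈ M) with hu
  have hAM := hmax (setOfSign s) hs
  have hBM := hmax (setOfSign t) ht
  refine ⟨u, hMeq ▸ hMB, ?_⟩
  -- count computations
  -- A at threshold m+1
  have hcountA1 : ((setOfSign s).filter fun x => ((m : ℤ) + 1) ≤ ordJ (w.symm x)).card = n - m := by
    rw [card_filter_setOfSign, hchar1]
    have : (Finset.univ.filter fun i => s i = σ i ∧ i ∉ D) = Dᶜ := by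
      ext i
      simp only [Finset.mem_filter, Finset.mem_univ, true_and, Finset.mem_compl]
      constructor
      · exact fun h => h.2
      · intro h
        refine ⟨?_, h⟩
        have hip : i ≠ p := fun hip => h (hip ▸ hpD)
        rw [hσ, flipS, Function.update_of_ne hip]
    rw [this, hC]
  -- B at threshold m
  have hcountB2 : ((setOfSign t).filter fun x => (m : ℤ) ≤ ordJ (w.symm x)).card = n - m + 1 := by
    rw [card_filter_setOfSign, hchar2]
    have : (Finset.univ.filter fun i => t i = σ i ∧ (i ∉ D ∨ i = p)) = insert p Dᶜ := by
      ext i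
      simp only [Finset.mem_filter, Finset.mem_univ, true_and, Finset.mem_insert,
        Finset.mem_compl]
      constructor
      · rintro ⟨-, h | h⟩
        · exact Or.inr h
        · exact Or.inl h
      · rintro (rfl | h)
        · refine ⟨?_, Or.inr rfl⟩
          rw [hσ, flipS, Function.update_self]
          exact bool_ne_not hp
        · have hiD : i ∉ D := h
          have hip : i ≠ p := fun hip => hiD (hip ▸ hpD)
          have hst : s i = t i := by
            by_contra hne
            exact hiD (by simp [hD, hne])
          refine ⟨?_, Or.inl hiD⟩
          rw [hσ, flipS, Function.update_of_ne hip, hst]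
    rw [this, Finset.card_insert_of_notMem (by simp [hpD]), hC]
  -- A at threshold 1
  have hcountA3 : ((setOfSign s).filter fun x => (1 : ℤ) ≤ ordJ (w.symm x)).card = n - 1 := by
    rw [card_filter_setOfSign, hchar3]
    have : (Finset.univ.filter fun i => s i = σ i) = Finset.univ.erase p := by
      ext i
      simp only [Finset.mem_filter, Finset.mem_univ, true_and, Finset.mem_erase, and_true]
      constructor
      · intro h hip
        subst hip
        rw [hσ, flipS, Function.update_self] at h
        exact (Bool.eq_not_self _).mp h
      · intro hip
        rw [hσ, flipS, Function.update_of_ne hip]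
    rw [this, Finset.card_erase_of_mem (Finset.mem_univ p), Finset.card_univ, Fintype.card_fin]
  -- inequalities for M
  have hM1 := card_filter_le_of_setLE hAM ((m : ℤ) + 1)
  have hM2 := card_filter_le_of_setLE hBM (m : ℤ)
  have hM3 := card_filter_le_of_setLE hAM 1
  rw [hcountA1, hMeq, card_filter_setOfSign, hchar1] at hM1
  rw [hcountB2, hMeq, card_filter_setOfSign, hchar2] at hM2
  rw [hcountA3, hMeq, card_filter_setOfSign, hchar3] at hM3
  -- consequence 1 : u agrees with σ off D
  have hoffD : ∀ i, i ∉ D → u i = σ i := by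
    have hsub : (Finset.univ.filter fun i => u i = σ i ∧ i ∉ D) ⊆ Dᶜ := by
      intro i hi
      simp only [Finset.mem_filter] at hi
      simp [Finset.mem_compl, hi.2.2]
    have hcard : Dᶜ.card ≤ (Finset.univ.filter fun i => u i = σ i ∧ i ∉ D).card := by
      rw [hC]; exact hM1
    have heq := Finset.eq_of_subset_of_card_le hsub hcard
    intro i hiD
    have : i ∈ (Finset.univ.filter fun i => u i = σ i ∧ i ∉ D) := by
      rw [heq]; simp [Finset.mem_compl, hiD]
    simp only [Finset.mem_filter] at this
    exact this.2.1
  -- consequence 2 : u p = σ p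
  have hup : u p = σ p := by
    have hsub : (Finset.univ.filter fun i => u i = σ i ∧ (i ∉ D ∨ i = p)) ⊆ insert p Dᶜ := by
      intro i hi
      simp only [Finset.mem_filter] at hi
      rcases hi.2.2 with h | h
      · simp [Finset.mem_insert, Finset.mem_compl, h]
      · simp [h]
    have hcard : (insert p Dᶜ).card ≤ _ :=
      le_trans (le_of_eq (by rw [Finset.card_insert_of_notMem (by simp [hpD]), hC])) hM2
    have heq := Finset.eq_of_subset_of_card_le hsub hcard
    have : p ∈ (Finset.univ.filter fun i => u i = σ i ∧ (i ∉ D ∨ i = p)) := by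
      rw [heq]; simp
    simp only [Finset.mem_filter] at this
    exact this.2.1
  -- consequence 3 : at most one disagreement overall
  set E : Finset (Fin n) := Finset.univ.filter (fun i => u i ≠ σ i) with hE
  have hEcard : E.card ≤ 1 := by
    have hsplit := Finset.card_filter_add_card_filter_not
      (s := (Finset.univ : Finset (Fin n))) (p := fun i => u i = σ i)
    rw [Finset.card_univ, Fintype.card_fin] at hsplit
    have : (Finset.univ.filter fun i => ¬ (u i = σ i)).card ≤ 1 := by omega
    simpa [hE] using this
  rcases Finset.eq_empty_or_nonempty E with hEe | ⟨r, hr⟩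
  · left
    funext i
    have : i ∉ E := hEe ▸ Finset.notMem_empty i
    simp only [hE, Finset.mem_filter, Finset.mem_univ, true_and, not_not] at this
    exact this
  · right
    have hrprop : u r ≠ σ r := by
      have := hr
      simp only [hE, Finset.mem_filter] at this
      exact this.2
    have hrD : r ∈ D := by
      by_contra hrD
      exact hrprop (hoffD r hrD)
    have hrp : r ≠ p := fun h => hrprop (h ▸ hup)
    refine ⟨r, hrp, by simpa [hD] using hrD, ?_⟩
    funext i
    by_cases hir : i = r
    · subst hir
      rw [flipS, Function.update_self]
      exact bool_ne_not (Ne.symm hrprop)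
    · rw [flipS, Function.update_of_ne hir]
      by_contra hne
      have hiE : i ∈ E := by simp [hE, hne]
      have : i = r := by
        have := Finset.card_le_one.1 hEcard i hiE r hr
        exact this
      exact hir this

-- ============ main theorem helpers ============

lemma sg_mul_le_one (a b : Bool) : sg a * sg b ≤ 1 := by
  cases a <;> cases b <;> norm_num [sg]

lemma sg_mul_of_ne {a b : Bool} (h : a ≠ b) : sg a * sg b = -1 := by
  cases a <;> cases b <;> simp_all <;> norm_num [sg]

lemma L_sub {n : ℕ} (L : (Fin n → ℝ) →ₗ[ℝ] ℝ) (s t : Fin n → Bool) :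
    L (eSet (setOfSign s)) - L (eSet (setOfSign t))
      = ∑ i ∈ Finset.univ.filter (fun i => s i ≠ t i), 2 * L (eVec (i, s i)) := by
  rw [L_eSet, L_eSet, ← Finset.sum_sub_distrib, Finset.sum_filter]
  apply Finset.sum_congr rfl
  intro i _
  by_cases h : s i = t i
  · rw [if_neg (by simpa using h), h, sub_self]
  · have ht : t i = !s i := bool_ne_not h
    rw [if_pos h, ht, L_eVec_not]
    ring

lemma exists_third {α : Type*} [DecidableEq α] {D : Finset α} (h : 3 ≤ D.card) (a b : α) :
    ∃ k ∈ D, k ≠ a ∧ k ≠ b := by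
  have h2 : ({a, b} : Finset α).card ≤ 2 :=
    le_trans (Finset.card_insert_le _ _) (by simp)
  have h3 := Finset.le_card_sdiff ({a, b} : Finset α) D
  have h4 : 0 < (D \ {a, b}).card := by omega
  obtain ⟨k, hk⟩ := Finset.card_pos.1 h4
  rw [Finset.mem_sdiff] at hk
  refine ⟨k, hk.1, ?_, ?_⟩ <;> intro hke <;> exact hk.2 (by simp [hke])

lemma flip_flip_eq {n : ℕ} {s t : Fin n → Bool} {q₁ q₂ : Fin n} (h : q₁ ≠ q₂)
    (h1 : s q₁ ≠ t q₁) (h2 : s q₂ ≠ t q₂) (h3 : ∀ i, i ≠ q₁ → i ≠ q₂ → s i = t i) :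
    s = flipS (flipS t q₁) q₂ := by
  funext i
  by_cases hi1 : i = q₁
  · subst hi1
    rw [flipS, Function.update_of_ne h, flipS, Function.update_self]
    exact bool_ne_not (Ne.symm h1)
  · by_cases hi2 : i = q₂
    · subst hi2
      rw [flipS, Function.update_self, flipS, Function.update_of_ne (Ne.symm h)]
      exact bool_ne_not (Ne.symm h2)
    · rw [flipS, Function.update_of_ne hi2, flipS, Function.update_of_ne hi1]
      exact h3 i hi1 hi2

-- ============ backward direction: short exchange gives an edge ============

lemma edge_short {n : ℕ} {ℬ : Finset (Finset (JJ n))} (hM : IsLagrangianMatroid ℬ)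
    (t : Fin n → Bool) (q : Fin n) :
    ∃ L : (Fin n → ℝ) →ₗ[ℝ] ℝ,
      L (eSet (setOfSign (flipS t q))) = L (eSet (setOfSign t)) ∧
      ∀ C ∈ ℬ, C ≠ setOfSign (flipS t q) → C ≠ setOfSign t →
        L (eSet C) < L (eSet (setOfSign (flipS t q))) := by
  classical
  set c : Fin n → ℝ := fun k => if k = q then 0 else sg (t k) with hc
  refine ⟨linFun c, ?_, ?_⟩
  · rw [linFun_eSet, linFun_eSet]
    apply Finset.sum_congr rfl
    intro k _
    by_cases hk : k = q
    · subst hk; simp [hc]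
    · rw [flipS, Function.update_of_ne hk]
  · intro C hC hCA hCB
    obtain ⟨hCadm, hCcard⟩ := hM.1 C hC
    have hCv := basis_eq_setOfSign hCadm hCcard
    set v : Fin n → Bool := fun i => decide ((i, true) ∈ C) with hv
    rw [hCv] at hCA hCB ⊢
    have hvs : v ≠ flipS t q := fun h => hCA (by rw [h])
    have hvt : v ≠ t := fun h => hCB (by rw [h])
    -- there is a disagreement away from q
    have hex : ∃ k, k ≠ q ∧ v k ≠ t k := by
      by_contra hno
      push_neg at hno
      by_cases hvq : v q = t q
      · exact hvt (funext fun k => by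
          by_cases hk : k = q
          · exact hk ▸ hvq
          · exact hno k hk)
      · refine hvs (funext fun k => ?_)
        by_cases hk : k = q
        · subst hk; rw [flipS, Function.update_self]; exact bool_ne_not (Ne.symm hvq)
        · rw [flipS, Function.update_of_ne hk]; exact hno k hk
    obtain ⟨k₀, hk₀q, hk₀⟩ := hex
    rw [linFun_eSet, linFun_eSet]
    apply Finset.sum_lt_sum
    · intro k _
      by_cases hk : k = q
      · subst hk; simp [hc]
      · rw [hc]
        simp only [if_neg hk]
        calc sg (v k) * sg (t k) ≤ 1 := sg_mul_le_one _ _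
          _ = sg (flipS t q k) * sg (t k) := by
              rw [flipS, Function.update_of_ne hk, sg_mul_self]
    · refine ⟨k₀, Finset.mem_univ _, ?_⟩
      rw [hc]
      simp only [if_neg hk₀q]
      rw [sg_mul_of_ne hk₀]
      rw [flipS, Function.update_of_ne hk₀q, sg_mul_self]
      norm_num

-- ============ backward direction: long exchange gives an edge ============

lemma neg_one_le_sg_mul (a b : Bool) : -1 ≤ sg a * sg b := by
  cases a <;> cases b <;> norm_num [sg]

lemma edge_long {n : ℕ} {ℬ : Finset (Finset (JJ n))} (hM : IsLagrangianMatroid ℬ)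
    (t : Fin n → Bool) {q₁ q₂ : Fin n} (hq : q₁ ≠ q₂)
    (hnot : ¬(setOfSign (flipS t q₁) ∈ ℬ ∧ setOfSign (flipS t q₂) ∈ ℬ)) :
    ∃ L : (Fin n → ℝ) →ₗ[ℝ] ℝ,
      L (eSet (setOfSign (flipS (flipS t q₁) q₂))) = L (eSet (setOfSign t)) ∧
      ∀ C ∈ ℬ, C ≠ setOfSign (flipS (flipS t q₁) q₂) → C ≠ setOfSign t →
        L (eSet C) < L (eSet (setOfSign (flipS (flipS t q₁) q₂))) := by
  classical
  set s : Fin n → Bool := flipS (flipS t q₁) q₂ with hsdef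
  have hs1 : s q₁ = !t q₁ := by
    rw [hsdef, flipS, Function.update_of_ne hq, flipS, Function.update_self]
  have hs2 : s q₂ = !t q₂ := by
    rw [hsdef, flipS, Function.update_self, flipS, Function.update_of_ne (Ne.symm hq)]
  have hsk : ∀ k, k ≠ q₁ → k ≠ q₂ → s k = t k := by
    intro k h1 h2
    rw [hsdef, flipS, Function.update_of_ne h2, flipS, Function.update_of_ne h1]
  set ε : ℝ := if setOfSign (flipS t q₂) ∈ ℬ then -1 else 1 with hε
  have hεabs : ε = 1 ∨ ε = -1 := by
    rw [hε]; split <;> simp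
  set c : Fin n → ℝ := fun k =>
    if k = q₁ then ε * sg (t q₁) else if k = q₂ then -(ε * sg (t q₂)) else 2 * sg (t k) with hc
  have hsplit : ∀ f : Fin n → ℝ,
      ∑ k, f k = f q₁ + (f q₂ + ∑ k ∈ (Finset.univ.erase q₁).erase q₂, f k) := by
    intro f
    rw [Finset.add_sum_erase _ f (Finset.mem_erase.2 ⟨Ne.symm hq, Finset.mem_univ q₂⟩),
      Finset.add_sum_erase _ f (Finset.mem_univ q₁)]
  have hcq1 : c q₁ = ε * sg (t q₁) := by rw [hc]; simp
  have hcq2 : c q₂ = -(ε * sg (t q₂)) := by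
    rw [hc]; simp [Ne.symm hq]
  have hck : ∀ k, k ≠ q₁ → k ≠ q₂ → c k = 2 * sg (t k) := by
    intro k h1 h2
    rw [hc]; simp [h1, h2]
  have hsq1 : sg (s q₁) * c q₁ = -ε := by
    rw [hs1, hcq1, sg_not]; linear_combination (-ε) * sg_mul_self (t q₁)
  have hsq2 : sg (s q₂) * c q₂ = ε := by
    rw [hs2, hcq2, sg_not]; linear_combination ε * sg_mul_self (t q₂)
  have htq1 : sg (t q₁) * c q₁ = ε := by
    rw [hcq1]; linear_combination ε * sg_mul_self (t q₁)
  have htq2 : sg (t q₂) * c q₂ = -ε := by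
    rw [hcq2]; linear_combination (-ε) * sg_mul_self (t q₂)
  refine ⟨linFun c, ?_, ?_⟩
  · rw [linFun_eSet, linFun_eSet]
    rw [hsplit fun k => sg (s k) * c k, hsplit fun k => sg (t k) * c k]
    have hrest : ∑ k ∈ (Finset.univ.erase q₁).erase q₂, sg (s k) * c k
        = ∑ k ∈ (Finset.univ.erase q₁).erase q₂, sg (t k) * c k := by
      apply Finset.sum_congr rfl
      intro k hk
      have h2 : k ≠ q₂ := (Finset.mem_erase.1 hk).1
      have h1 : k ≠ q₁ := (Finset.mem_erase.1 (Finset.mem_erase.1 hk).2).1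
      rw [hsk k h1 h2]
    rw [hrest, hsq1, hsq2, htq1, htq2]
    ring
  · intro C hC hCA hCB
    obtain ⟨hCadm, hCcard⟩ := hM.1 C hC
    have hCv := basis_eq_setOfSign hCadm hCcard
    set v : Fin n → Bool := fun i => decide ((i, true) ∈ C) with hv
    rw [hCv] at hCA hCB ⊢
    have hvs : v ≠ s := fun h => hCA (by rw [h, hsdef])
    have hvt : v ≠ t := fun h => hCB (by rw [h])
    rw [linFun_eSet, linFun_eSet]
    rw [hsplit fun k => sg (v k) * c k, hsplit fun k => sg (s k) * c k]
    by_cases hoff : ∀ k, k ≠ q₁ → k ≠ q₂ → v k = t k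
    · -- v agrees with t away from the two pairs
      have hrest : ∑ k ∈ (Finset.univ.erase q₁).erase q₂, sg (v k) * c k
          = ∑ k ∈ (Finset.univ.erase q₁).erase q₂, sg (s k) * c k := by
        apply Finset.sum_congr rfl
        intro k hk
        have h2 : k ≠ q₂ := (Finset.mem_erase.1 hk).1
        have h1 : k ≠ q₁ := (Finset.mem_erase.1 (Finset.mem_erase.1 hk).2).1
        rw [hoff k h1 h2, hsk k h1 h2]
      rw [hrest]
      have hQ : sg (v q₁) * c q₁ + sg (v q₂) * c q₂ < sg (s q₁) * c q₁ + sg (s q₂) * c q₂ := by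
        rw [hsq1, hsq2]
        by_cases hv1 : v q₁ = t q₁ <;> by_cases hv2 : v q₂ = t q₂
        · exact absurd (funext fun k => by
            by_cases h1 : k = q₁
            · exact h1 ▸ hv1
            · by_cases h2 : k = q₂
              · exact h2 ▸ hv2
              · exact hoff k h1 h2) hvt
        · -- v = flipS t q₂, which is in ℬ, so ε = -1
          have hv2' : v q₂ = !t q₂ := bool_ne_not (Ne.symm hv2)
          have hveq : v = flipS t q₂ := funext fun k => by
            by_cases h2 : k = q₂
            · subst h2; rw [flipS, Function.update_self]; exact hv2'
            · rw [flipS, Function.update_of_ne h2]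
              by_cases h1 : k = q₁
              · exact h1 ▸ hv1
              · exact hoff k h1 h2
          have hmem : setOfSign (flipS t q₂) ∈ ℬ := by rw [← hveq, ← hCv]; exact hC
          have hεval : ε = -1 := by rw [hε, if_pos hmem]
          have hA : sg (v q₁) * c q₁ = ε := by rw [hv1]; exact htq1
          have hB2 : sg (v q₂) * c q₂ = ε := by
            rw [hv2', sg_not, hcq2]; linear_combination ε * sg_mul_self (t q₂)
          rw [hA, hB2, hεval]; norm_num
        · -- v = flipS t q₁, which is in ℬ, so ε = 1
          have hv1' : v q₁ = !t q₁ := bool_ne_not (Ne.symm hv1)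
          have hveq : v = flipS t q₁ := funext fun k => by
            by_cases h1 : k = q₁
            · subst h1; rw [flipS, Function.update_self]; exact hv1'
            · rw [flipS, Function.update_of_ne h1]
              by_cases h2 : k = q₂
              · exact h2 ▸ hv2
              · exact hoff k h1 h2
          have hmem : setOfSign (flipS t q₁) ∈ ℬ := by rw [← hveq, ← hCv]; exact hC
          have hn2 : setOfSign (flipS t q₂) ∉ ℬ := fun h2 => hnot ⟨hmem, h2⟩
          have hεval : ε = 1 := by rw [hε, if_neg hn2]
          have hA : sg (v q₁) * c q₁ = -ε := by
            rw [hv1', sg_not, hcq1]; linear_combination (-ε) * sg_mul_self (t q₁)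
          have hB2 : sg (v q₂) * c q₂ = -ε := by rw [hv2]; exact htq2
          rw [hA, hB2, hεval]; norm_num
        · -- v = s, impossible
          exact absurd (funext fun k => by
            by_cases h1 : k = q₁
            · subst h1; rw [hs1]; exact bool_ne_not (Ne.symm hv1)
            · by_cases h2 : k = q₂
              · subst h2; rw [hs2]; exact bool_ne_not (Ne.symm hv2)
              · rw [hsk k h1 h2]; exact hoff k h1 h2) hvs
      linarith [hQ]
    · -- v disagrees with t somewhere away from the two pairs
      push_neg at hoff
      obtain ⟨k₀, hk₀1, hk₀2, hk₀⟩ := hoff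
      have hk₀mem : k₀ ∈ (Finset.univ.erase q₁).erase q₂ :=
        Finset.mem_erase.2 ⟨hk₀2, Finset.mem_erase.2 ⟨hk₀1, Finset.mem_univ _⟩⟩
      have hrest : ∑ k ∈ (Finset.univ.erase q₁).erase q₂, sg (v k) * c k
          ≤ (∑ k ∈ (Finset.univ.erase q₁).erase q₂, sg (s k) * c k) - 4 := by
        rw [← Finset.add_sum_erase _ _ hk₀mem, ← Finset.add_sum_erase _ _ hk₀mem]
        have hterm : sg (v k₀) * c k₀ = sg (s k₀) * c k₀ - 4 := by
          rw [hck k₀ hk₀1 hk₀2, hsk k₀ hk₀1 hk₀2]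
          linear_combination 2 * sg_mul_of_ne hk₀ - 2 * sg_mul_self (t k₀)
        have hrest2 : ∑ k ∈ ((Finset.univ.erase q₁).erase q₂).erase k₀, sg (v k) * c k
            ≤ ∑ k ∈ ((Finset.univ.erase q₁).erase q₂).erase k₀, sg (s k) * c k := by
          apply Finset.sum_le_sum
          intro k hk
          have h2 : k ≠ q₂ := (Finset.mem_erase.1 (Finset.mem_erase.1 hk).2).1
          have h1 : k ≠ q₁ :=
            (Finset.mem_erase.1 (Finset.mem_erase.1 (Finset.mem_erase.1 hk).2).2).1
          rw [hck k h1 h2, hsk k h1 h2]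
          have h3 := sg_mul_le_one (v k) (t k)
          have h4 := sg_mul_self (t k)
          nlinarith
        linarith
      have hb1 : sg (v q₁) * c q₁ ≤ 1 := by
        rw [hcq1]
        have h3 := sg_mul_le_one (v q₁) (t q₁)
        have h4 := neg_one_le_sg_mul (v q₁) (t q₁)
        rcases hεabs with h | h <;> rw [h] <;> nlinarith
      have hb2 : sg (v q₂) * c q₂ ≤ 1 := by
        rw [hcq2]
        have h3 := sg_mul_le_one (v q₂) (t q₂)
        have h4 := neg_one_le_sg_mul (v q₂) (t q₂)
        rcases hεabs with h | h <;> rw [h] <;> nlinarith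
      rw [hsq1, hsq2]
      rcases hεabs with h | h <;> rw [h] <;> linarith


/-- Two bases `A, B` of a Lagrangian matroid are adjacent vertices of
the matroid polytope iff they are related by a short exchange, or by a long exchange
such that at most one of the two intermediate sets is a basis. -/
theorem lagrangian_adjacency_criterion {n : ℕ} (ℬ : Finset (Finset (JJ n)))
    (hM : IsLagrangianMatroid ℬ) (A B : Finset (JJ n))
    (hA : A ∈ ℬ) (hB : B ∈ ℬ) (hAB : A ≠ B) :
    IsEdge ℬ A B ↔
      ((∃ i : JJ n, A = symmDiff B ({i, starJ i} : Finset (JJ n))) ∨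
        (∃ i j : JJ n, i ≠ j ∧ i ≠ starJ j ∧
          A = symmDiff B ({i, starJ i, j, starJ j} : Finset (JJ n)) ∧
          ¬(symmDiff B ({i, starJ i} : Finset (JJ n)) ∈ ℬ ∧
            symmDiff B ({j, starJ j} : Finset (JJ n)) ∈ ℬ))) := by
  classical
  obtain ⟨hadmA, hcardA⟩ := hM.1 A hA
  obtain ⟨hadmB, hcardB⟩ := hM.1 B hB
  have hAs := basis_eq_setOfSign hadmA hcardA
  have hBs := basis_eq_setOfSign hadmB hcardB
  set s : Fin n → Bool := fun i => decide ((i, true) ∈ A) with hsdef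
  set t : Fin n → Bool := fun i => decide ((i, true) ∈ B) with htdef
  have hst : s ≠ t := fun h => hAB (by rw [hAs, hBs, h])
  set D : Finset (Fin n) := Finset.univ.filter (fun i => s i ≠ t i) with hD
  have hDmem : ∀ i, i ∈ D ↔ s i ≠ t i := by intro i; simp [hD]
  have hDne : D.Nonempty := by
    by_contra h
    rw [Finset.not_nonempty_iff_eq_empty] at h
    apply hst
    funext i
    by_contra hne
    have : i ∈ D := (hDmem i).2 hne
    simp [h] at this
  constructor
  · rintro ⟨-, -, -, L, hLeq, hLlt⟩
    rw [hAs, hBs] at hLeq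
    set d : Fin n → ℝ := fun i => L (eVec (i, s i)) with hd
    have hsum : ∑ i ∈ D, d i = 0 := by
      have h0 := L_sub L s t
      rw [hLeq, sub_self] at h0
      have h2 : (2:ℝ) * ∑ i ∈ D, d i = 0 := by
        rw [Finset.mul_sum]
        exact h0.symm
      linarith
    rcases eq_or_ne D.card 1 with hm1 | hm1
    · -- short exchange
      obtain ⟨q, hDq⟩ := Finset.card_eq_one.1 hm1
      left
      refine ⟨(q, false), ?_⟩
      rw [hBs, pair_star_eq_pairP, hAs, symmDiff_pairP]
      congr 1
      funext k
      by_cases hk : k = q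
      · subst hk
        rw [flipS, Function.update_self]
        have hkD : s k ≠ t k := (hDmem k).1 (by simp [hDq])
        exact bool_ne_not (Ne.symm hkD)
      · rw [flipS, Function.update_of_ne hk]
        by_contra hne
        exact hk (by have := (hDmem k).2 hne; rwa [hDq, Finset.mem_singleton] at this)
    rcases eq_or_ne D.card 2 with hm2 | hm2
    · -- long exchange
      obtain ⟨q₁, q₂, hq, hDq⟩ := Finset.card_eq_two.1 hm2
      have hq1D : s q₁ ≠ t q₁ := (hDmem q₁).1 (by simp [hDq])
      have hq2D : s q₂ ≠ t q₂ := (hDmem q₂).1 (by simp [hDq])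
      have hoffD : ∀ k, k ≠ q₁ → k ≠ q₂ → s k = t k := by
        intro k h1 h2
        by_contra hne
        have := (hDmem k).2 hne
        rw [hDq] at this
        simp only [Finset.mem_insert, Finset.mem_singleton] at this
        tauto
      right
      refine ⟨(q₁, false), (q₂, false), by simp [Prod.ext_iff, hq],
        by simp [starJ, Prod.ext_iff, hq], ?_, ?_⟩
      · rw [hBs, hAs, quad_star_eq ((q₁, false) : JJ n) ((q₂, false) : JJ n) hq,
          symmDiff_pairP2 t hq]
        congr 1
        exact flip_flip_eq hq hq1D hq2D hoffD
      · rintro ⟨h1, h2⟩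
        rw [hBs, pair_star_eq_pairP, symmDiff_pairP] at h1 h2
        -- both intermediates in ℬ contradicts strictness
        set d' : Fin n → ℝ := fun i => L (eVec (i, t i)) with hd'
        have hsum' : d' q₁ + d' q₂ = 0 := by
          have h0 := L_sub L t s
          rw [hLeq, sub_self] at h0
          have hDD : (Finset.univ.filter fun i => t i ≠ s i) = D := by
            ext k; simp [hD, ne_comm]
          rw [hDD, hDq, Finset.sum_pair hq] at h0
          have : (0:ℝ) = 2 * d' q₁ + 2 * d' q₂ := h0
          linarith
        have e1 : L (eSet (setOfSign (flipS t q₁))) = L (eSet (setOfSign t)) - 2 * d' q₁ :=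
          L_flip L t q₁
        have e2 : L (eSet (setOfSign (flipS t q₂))) = L (eSet (setOfSign t)) - 2 * d' q₂ :=
          L_flip L t q₂
        have hC1A : setOfSign (flipS t q₁) ≠ A := by
          rw [hAs]
          exact setOfSign_ne (i := q₂)
            (by rw [flipS, Function.update_of_ne (Ne.symm hq)]; exact Ne.symm hq2D)
        have hC1B : setOfSign (flipS t q₁) ≠ B := by
          rw [hBs]
          exact setOfSign_ne (i := q₁)
            (by rw [flipS, Function.update_self]; exact Bool.not_ne_self _)
        have hC2A : setOfSign (flipS t q₂) ≠ A := by
          rw [hAs]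
          exact setOfSign_ne (i := q₁)
            (by rw [flipS, Function.update_of_ne hq]; exact Ne.symm hq1D)
        have hC2B : setOfSign (flipS t q₂) ≠ B := by
          rw [hBs]
          exact setOfSign_ne (i := q₂)
            (by rw [flipS, Function.update_self]; exact Bool.not_ne_self _)
        have hlt1 := hLlt _ h1 hC1A hC1B
        have hlt2 := hLlt _ h2 hC2A hC2B
        rw [hAs, hLeq] at hlt1 hlt2
        rw [e1] at hlt1
        rw [e2] at hlt2
        linarith
    · -- |D| ≥ 3 : impossible
      exfalso
      have hm3 : 3 ≤ D.card := by
        have h1 := Finset.card_pos.2 hDne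
        omega
      obtain ⟨qmin, hqminD, hmin⟩ := Finset.exists_min_image D d hDne
      obtain ⟨qmax, hqmaxD, hmax⟩ := Finset.exists_max_image D d hDne
      have hpmin : s qmin ≠ t qmin := (hDmem qmin).1 hqminD
      have hpmax : s qmax ≠ t qmax := (hDmem qmax).1 hqmaxD
      have h1 : 0 < d qmin + d qmax := by
        obtain ⟨u, huB, hcase⟩ := exchange hM (hAs ▸ hA) (hBs ▸ hB) hpmin
        rcases hcase with rfl | ⟨r, hrp, hrD', rfl⟩
        · -- single flip at the minimum : forces d qmin > 0, contradicting the zero sum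
          exfalso
          have hne1 : setOfSign (flipS s qmin) ≠ A := by
            rw [hAs]
            exact setOfSign_ne (i := qmin)
              (by rw [flipS, Function.update_self]; exact Bool.not_ne_self _)
          have hne2 : setOfSign (flipS s qmin) ≠ B := by
            rw [hBs]
            obtain ⟨k, hkD, hkq⟩ := Finset.exists_mem_ne (s := D) (by omega) qmin
            exact setOfSign_ne (i := k)
              (by rw [flipS, Function.update_of_ne hkq]; exact (hDmem k).1 hkD)
          have hlt := hLlt _ huB hne1 hne2
          rw [hAs, L_flip] at hlt
          have hdmin : 0 < d qmin := by linarith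
          have : 0 < ∑ i ∈ D, d i :=
            Finset.sum_pos (fun i hi => lt_of_lt_of_le hdmin (hmin i hi)) hDne
          linarith
        · -- double flip at the minimum
          have hrD : r ∈ D := (hDmem r).2 hrD'
          have hne1 : setOfSign (flipS (flipS s qmin) r) ≠ A := by
            rw [hAs]
            exact setOfSign_ne (i := qmin)
              (by rw [flipS, Function.update_of_ne (Ne.symm hrp), flipS,
                    Function.update_self]; exact Bool.not_ne_self _)
          have hne2 : setOfSign (flipS (flipS s qmin) r) ≠ B := by
            rw [hBs]
            obtain ⟨k, hkD, hkq, hkr⟩ := exists_third hm3 qmin r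
            exact setOfSign_ne (i := k)
              (by rw [flipS, Function.update_of_ne hkr, flipS, Function.update_of_ne hkq]
                  exact (hDmem k).1 hkD)
          have hlt := hLlt _ huB hne1 hne2
          rw [hAs, L_flip, L_flip] at hlt
          have hval : L (eVec (r, flipS s qmin r)) = d r := by
            rw [flipS, Function.update_of_ne hrp]
          rw [hval] at hlt
          have : 0 < d qmin + d r := by linarith
          have := hmax r hrD
          linarith
      have h2 : d qmax + d qmin < 0 := by
        obtain ⟨u, huB, hcase⟩ := exchange hM (hBs ▸ hB) (hAs ▸ hA) (Ne.symm hpmax)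
        have hd'eq : ∀ i, s i ≠ t i → L (eVec (i, t i)) = -d i := by
          intro i hi
          have : t i = !s i := bool_ne_not hi
          rw [this, L_eVec_not]
        rcases hcase with rfl | ⟨r, hrp, hrD', rfl⟩
        · exfalso
          have hne1 : setOfSign (flipS t qmax) ≠ B := by
            rw [hBs]
            exact setOfSign_ne (i := qmax)
              (by rw [flipS, Function.update_self]; exact Bool.not_ne_self _)
          have hne2 : setOfSign (flipS t qmax) ≠ A := by
            rw [hAs]
            obtain ⟨k, hkD, hkq⟩ := Finset.exists_mem_ne (s := D) (by omega) qmax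
            exact setOfSign_ne (i := k)
              (by rw [flipS, Function.update_of_ne hkq]; exact Ne.symm ((hDmem k).1 hkD))
          have hlt := hLlt _ huB hne2 hne1
          rw [hAs, hLeq, L_flip, hd'eq qmax hpmax] at hlt
          have hdmax : d qmax < 0 := by linarith
          have : ∑ i ∈ D, d i < 0 :=
            Finset.sum_neg (fun i hi => lt_of_le_of_lt (hmax i hi) hdmax) hDne
          linarith
        · have hrD : r ∈ D := (hDmem r).2 (Ne.symm hrD')
          have hne1 : setOfSign (flipS (flipS t qmax) r) ≠ B := by
            rw [hBs]
            exact setOfSign_ne (i := qmax)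
              (by rw [flipS, Function.update_of_ne (Ne.symm hrp), flipS,
                    Function.update_self]; exact Bool.not_ne_self _)
          have hne2 : setOfSign (flipS (flipS t qmax) r) ≠ A := by
            rw [hAs]
            obtain ⟨k, hkD, hkq, hkr⟩ := exists_third hm3 qmax r
            exact setOfSign_ne (i := k)
              (by rw [flipS, Function.update_of_ne hkr, flipS, Function.update_of_ne hkq]
                  exact Ne.symm ((hDmem k).1 hkD))
          have hlt := hLlt _ huB hne2 hne1
          rw [hAs, hLeq, L_flip, L_flip] at hlt
          have hval : L (eVec (r, flipS t qmax r)) = -d r := by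
            rw [flipS, Function.update_of_ne hrp]
            exact hd'eq r ((hDmem r).1 hrD)
          rw [hval, hd'eq qmax hpmax] at hlt
          have : d qmax + d r < 0 := by linarith
          have := hmin r hrD
          linarith
      linarith
  · rintro (⟨i, hi⟩ | ⟨i, j, hij, hijs, hAeq, hnot⟩)
    · -- short exchange gives an edge
      have hflip : A = setOfSign (flipS t i.1) := by
        rw [hi, hBs, pair_star_eq_pairP, symmDiff_pairP]
      obtain ⟨L, hLeq, hLlt⟩ := edge_short hM t i.1
      refine ⟨hA, hB, hAB, L, ?_, ?_⟩
      · rw [hflip, hBs]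
        exact hLeq
      · intro C hC h1 h2
        rw [hflip] at h1 ⊢
        rw [hBs] at h2
        exact hLlt C hC h1 h2
    · -- long exchange gives an edge
      have hq : i.1 ≠ j.1 := by
        intro h
        by_cases hb : i.2 = j.2
        · exact hij (Prod.ext_iff.2 ⟨h, hb⟩)
        · exact hijs (Prod.ext_iff.2 ⟨h, bool_ne_not (Ne.symm hb)⟩)
      have hflip : A = setOfSign (flipS (flipS t i.1) j.1) := by
        rw [hAeq, hBs, quad_star_eq i j hq, symmDiff_pairP2 t hq]
      have hnot' : ¬(setOfSign (flipS t i.1) ∈ ℬ ∧ setOfSign (flipS t j.1) ∈ ℬ) := by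
        rintro ⟨h1, h2⟩
        exact hnot ⟨by rw [hBs, pair_star_eq_pairP, symmDiff_pairP]; exact h1,
          by rw [hBs, pair_star_eq_pairP, symmDiff_pairP]; exact h2⟩
      obtain ⟨L, hLeq, hLlt⟩ := edge_long hM t hq hnot'
      refine ⟨hA, hB, hAB, L, ?_, ?_⟩
      · rw [hflip, hBs]
        exact hLeq
      · intro C hC h1 h2
        rw [hflip] at h1 ⊢
        rw [hBs] at h2
        exact hLlt C hC h1 h2
end

section
/- Let M be a Lagrangian matroid, F a basis of M, and s_F an orientation of M relative to F. For bases G, A of M define s(G,A) = s_F(A)·s_F(G)·(−1)^{|G∖(F∪A)|}. Then for every basis G of M, the map A ↦ s(G,A) is an orientation of M relative to the fundamental basis G, i.e. it satisfies axioms (i)–(iv) with G in place of F. -/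
open Finset Matrix
open scoped Classical

namespace CFB

variable {n : ℕ}

/-- The characteristic function of a Lagrangian basis. -/
def chi (A : Finset (JJ n)) (i : Fin n) : Bool := decide ((i, true) ∈ A)

lemma mem_basis_iff {ℬ : Finset (Finset (JJ n))} (hM : IsLagrangianMatroid ℬ)
    {A : Finset (JJ n)} (hA : A ∈ ℬ) : ∀ x : JJ n, x ∈ A ↔ chi A x.1 = x.2 := by
  obtain ⟨hadm, hcard⟩ := hM.1 A hA
  have hnot : ∀ i : Fin n, ¬ ((i, true) ∈ A ∧ (i, false) ∈ A) := by
    rintro i ⟨h1, h2⟩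
    exact hadm (i, true) h1 (by simpa [starJ] using h2)
  have hinj : Set.InjOn Prod.fst (A : Set (JJ n)) := by
    rintro ⟨i, b⟩ hx ⟨i', b'⟩ hy (h : i = i')
    subst h
    by_contra hne
    have hbb : b' = !b := by
      cases b <;> cases b' <;> simp_all
    exact hadm (i, b) hx (by simpa [starJ, hbb] using hy)
  have himg : A.image Prod.fst = Finset.univ := by
    apply Finset.eq_univ_of_card
    rw [Finset.card_image_of_injOn hinj, hcard]
    simp
  have hex : ∀ i : Fin n, ∃ b, (i, b) ∈ A := by
    intro i
    have : i ∈ A.image Prod.fst := by rw [himg]; exact Finset.mem_univ i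
    obtain ⟨⟨i', b⟩, hx, h⟩ := Finset.mem_image.mp this
    exact ⟨b, by simpa [← h] using hx⟩
  rintro ⟨i, b⟩
  cases b
  · simp only [chi]
    constructor
    · intro h
      simp only [decide_eq_false_iff_not]
      exact fun ht => hnot i ⟨ht, h⟩
    · intro h
      obtain ⟨b, hb⟩ := hex i
      cases b
      · exact hb
      · simp_all
  · simp [chi]

lemma card_graph_like (S : Finset (JJ n)) (f : Fin n → Bool) (P : Fin n → Prop)
    [DecidablePred P]
    (h : ∀ x : JJ n, x ∈ S ↔ (x.2 = f x.1 ∧ P x.1)) :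
    S.card = (Finset.univ.filter P).card := by
  have : S = (Finset.univ.filter P).image (fun i => (i, f i)) := by
    ext ⟨i, b⟩
    simp only [h, Finset.mem_image, Finset.mem_filter, Finset.mem_univ, true_and,
      Prod.mk.injEq]
    constructor
    · rintro ⟨hb, hP⟩; exact ⟨i, hP, rfl, hb.symm⟩
    · rintro ⟨j, hP, rfl, rfl⟩; exact ⟨rfl, hP⟩
  rw [this, Finset.card_image_of_injective _ (fun i j hij => (Prod.mk.injEq _ _ _ _ ▸ hij).1)]

lemma height_eq {A H : Finset (JJ n)} (hA : ∀ x : JJ n, x ∈ A ↔ chi A x.1 = x.2)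
    (hH : ∀ x : JJ n, x ∈ H ↔ chi H x.1 = x.2) :
    heightF H A = (Finset.univ.filter fun t => chi A t ≠ chi H t).card := by
  have h1 : (A ∩ H).card = (Finset.univ.filter fun t => chi A t = chi H t).card := by
    apply card_graph_like _ (chi A)
    rintro ⟨i, b⟩
    simp only [Finset.mem_inter, hA ⟨i, b⟩, hH ⟨i, b⟩]
    constructor
    · rintro ⟨h1, h2⟩; exact ⟨h1.symm, h1.trans h2.symm⟩
    · rintro ⟨h1, h2⟩; exact ⟨h1.symm, h2.symm.trans h1.symm⟩
  have h2 : (Finset.univ.filter fun t => chi A t = chi H t).card +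
      (Finset.univ.filter fun t => ¬ (chi A t = chi H t)).card = n := by
    rw [Finset.card_filter_add_card_filter_not]
    simp
  have h3 : (Finset.univ.filter fun t => chi A t = chi H t).card ≤ n := by omega
  have h4 : (Finset.univ.filter fun t => chi A t ≠ chi H t)
      = (Finset.univ.filter fun t => ¬ (chi A t = chi H t)) := by
    ext t; simp
  rw [h4]
  unfold heightF
  omega

lemma mem_symmDiff_iff {A B : Finset (JJ n)} (hA : ∀ x : JJ n, x ∈ A ↔ chi A x.1 = x.2)
    (hB : ∀ x : JJ n, x ∈ B ↔ chi B x.1 = x.2) (x : JJ n) :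
    x ∈ symmDiff A B ↔ chi A x.1 ≠ chi B x.1 := by
  rw [Finset.mem_symmDiff, hA x, hB x]
  rcases x with ⟨i, b⟩
  cases hAB : chi A i <;> cases hB' : chi B i <;> cases b <;> simp_all

lemma mem_pair_iff (i : JJ n) (x : JJ n) :
    x ∈ ({i, starJ i} : Finset (JJ n)) ↔ x.1 = i.1 := by
  rcases x with ⟨t, b⟩; rcases i with ⟨i1, i2⟩
  simp only [Finset.mem_insert, Finset.mem_singleton, starJ, Prod.mk.injEq]
  cases b <;> cases i2 <;> simp

lemma mem_quad_iff (i j : JJ n) (x : JJ n) :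
    x ∈ ({i, starJ i, j, starJ j} : Finset (JJ n)) ↔ x.1 = i.1 ∨ x.1 = j.1 := by
  rcases x with ⟨t, b⟩; rcases i with ⟨i1, i2⟩; rcases j with ⟨j1, j2⟩
  simp only [Finset.mem_insert, Finset.mem_singleton, starJ, Prod.mk.injEq]
  cases b <;> cases i2 <;> cases j2 <;> simp

/-- From a long-exchange symmetric difference, read off where the characteristic
functions differ. -/
lemma long_diff {A B : Finset (JJ n)} (hA : ∀ x : JJ n, x ∈ A ↔ chi A x.1 = x.2)
    (hB : ∀ x : JJ n, x ∈ B ↔ chi B x.1 = x.2) {i j : JJ n}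
    (hsd : symmDiff A B = ({i, starJ i, j, starJ j} : Finset (JJ n))) :
    ∀ t : Fin n, chi A t ≠ chi B t ↔ (t = i.1 ∨ t = j.1) := by
  intro t
  have := mem_symmDiff_iff hA hB (t, true)
  rw [hsd, mem_quad_iff] at this
  exact this.symm

lemma star_ne_fst {i j : JJ n} (h1 : i ≠ j) (h2 : i ≠ starJ j) : i.1 ≠ j.1 := by
  rcases i with ⟨i1, i2⟩; rcases j with ⟨j1, j2⟩
  intro h
  cases i2 <;> cases j2 <;> simp_all [starJ]

/-- chi of a single short exchange. -/
lemma chi_flip_one {A A' : Finset (JJ n)} (hA : ∀ x : JJ n, x ∈ A ↔ chi A x.1 = x.2)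
    (hA' : ∀ x : JJ n, x ∈ A' ↔ chi A' x.1 = x.2) (i : JJ n)
    (h : A' = symmDiff A ({i, starJ i} : Finset (JJ n))) (t : Fin n) :
    chi A' t = if t = i.1 then !(chi A t) else chi A t := by
  set c : Bool := if t = i.1 then !(chi A t) else chi A t with hc
  have hmem : (t, c) ∈ A' := by
    rw [h, Finset.mem_symmDiff]
    by_cases ht : t = i.1
    · right
      constructor
      · rw [mem_pair_iff]; exact ht
      · rw [hA ⟨t, c⟩]
        simp [hc, ht]
    · left
      constructor
      · rw [hA ⟨t, c⟩]; simp [hc, ht]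
      · rw [mem_pair_iff]; exact ht
  exact (hA' (t, c)).mp hmem

/-- chi of a double short exchange. -/
lemma chi_flip_two {A A' : Finset (JJ n)} (hA : ∀ x : JJ n, x ∈ A ↔ chi A x.1 = x.2)
    (hA' : ∀ x : JJ n, x ∈ A' ↔ chi A' x.1 = x.2) (i j : JJ n)
    (h : A' = symmDiff A ({i, starJ i, j, starJ j} : Finset (JJ n))) (t : Fin n) :
    chi A' t = if t = i.1 ∨ t = j.1 then !(chi A t) else chi A t := by
  set c : Bool := if t = i.1 ∨ t = j.1 then !(chi A t) else chi A t with hc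
  have hmem : (t, c) ∈ A' := by
    rw [h, Finset.mem_symmDiff]
    by_cases ht : t = i.1 ∨ t = j.1
    · right
      constructor
      · rw [mem_quad_iff]; exact ht
      · rw [hA ⟨t, c⟩]; simp [hc, ht]
    · left
      constructor
      · rw [hA ⟨t, c⟩]; simp [hc, ht]
      · rw [mem_quad_iff]; exact ht
  exact (hA' (t, c)).mp hmem

lemma filter_split_pair (i j : Fin n) (hij : i ≠ j) (P : Fin n → Prop) [DecidablePred P] :
    (Finset.univ.filter P).card = ((if P i then 1 else 0) + (if P j then 1 else 0)) +
      (Finset.univ.filter fun t => P t ∧ t ≠ i ∧ t ≠ j).card := by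
  classical
  have key := Finset.card_filter_add_card_filter_not
    (s := Finset.univ.filter P) (p := fun t => t = i ∨ t = j)
  have h1 : (Finset.univ.filter P).filter (fun t => t = i ∨ t = j)
      = ({i, j} : Finset (Fin n)).filter P := by
    ext t
    simp only [Finset.mem_filter, Finset.mem_univ, true_and, Finset.mem_insert,
      Finset.mem_singleton]
    tauto
  have h2 : (Finset.univ.filter P).filter (fun t => ¬ (t = i ∨ t = j))
      = Finset.univ.filter fun t => P t ∧ t ≠ i ∧ t ≠ j := by
    ext t
    simp only [Finset.mem_filter, Finset.mem_univ, true_and, ne_eq]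
    tauto
  have h3 : (({i, j} : Finset (Fin n)).filter P).card
      = (if P i then 1 else 0) + (if P j then 1 else 0) := by
    by_cases hi : P i <;> by_cases hj : P j <;>
      simp [Finset.filter_insert, Finset.filter_singleton, hi, hj, hij,
        Finset.card_insert_of_notMem]
  rw [h1, h2, h3] at key
  omega

lemma core_congr (P Q : Fin n → Prop) [DecidablePred P] [DecidablePred Q] (i j : Fin n)
    (h : ∀ t, t ≠ i → t ≠ j → (P t ↔ Q t)) :
    (Finset.univ.filter fun t => P t ∧ t ≠ i ∧ t ≠ j).card
      = (Finset.univ.filter fun t => Q t ∧ t ≠ i ∧ t ≠ j).card := by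
  congr 1
  ext t
  simp only [Finset.mem_filter, Finset.mem_univ, true_and]
  constructor
  · rintro ⟨hP, h1, h2⟩; exact ⟨(h t h1 h2).mp hP, h1, h2⟩
  · rintro ⟨hQ, h1, h2⟩; exact ⟨(h t h1 h2).mpr hQ, h1, h2⟩

lemma cdiff_eq {F A G : Finset (JJ n)}
    (hF : ∀ x : JJ n, x ∈ F ↔ chi F x.1 = x.2)
    (hA : ∀ x : JJ n, x ∈ A ↔ chi A x.1 = x.2)
    (hG : ∀ x : JJ n, x ∈ G ↔ chi G x.1 = x.2) :
    (G \ (F ∪ A)).card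
      = (Finset.univ.filter fun t => chi G t ≠ chi F t ∧ chi G t ≠ chi A t).card := by
  apply card_graph_like _ (chi G)
  rintro ⟨t, b⟩
  simp only [Finset.mem_sdiff, Finset.mem_union, hF ⟨t, b⟩, hA ⟨t, b⟩, hG ⟨t, b⟩]
  cases hg : chi G t <;> cases hf : chi F t <;> cases ha : chi A t <;> cases b <;> simp_all

lemma pow_neg_one_eq_of (m k : ℕ) (h : (m + k) % 2 = 0) : (-1 : ℤ) ^ m = (-1) ^ k := by
  rcases Nat.even_or_odd m with hm | hm <;> rcases Nat.even_or_odd k with hk | hk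
  · rw [hm.neg_one_pow, hk.neg_one_pow]
  · exfalso; rw [Nat.even_iff] at hm; rw [Nat.odd_iff] at hk; omega
  · exfalso; rw [Nat.odd_iff] at hm; rw [Nat.even_iff] at hk; omega
  · rw [hm.neg_one_pow, hk.neg_one_pow]

lemma pow_neg_one_ne_of (m k : ℕ) (h : (m + k) % 2 = 1) : (-1 : ℤ) ^ m = -(-1) ^ k := by
  rcases Nat.even_or_odd m with hm | hm <;> rcases Nat.even_or_odd k with hk | hk
  · exfalso; rw [Nat.even_iff] at hm hk; omega
  · rw [hm.neg_one_pow, hk.neg_one_pow]; try ring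
  · rw [hm.neg_one_pow, hk.neg_one_pow]; try ring
  · exfalso; rw [Nat.odd_iff] at hm hk; omega

lemma core_long (sA sB u w : ℤ) (kFA kFB kGA kGB kCA1 kCA2 kCB1 kCB2 cF cG : ℕ)
    (hF2 : kFA + kFB = 2) (hG2 : kGA + kGB = 2)
    (hpar : (kCA1 + kCA2 + (kCB1 + kCB2)) % 2 = (kFA + kGA) % 2)
    (hEq : kFA + cF = kFB + cF → sA = sB)
    (hNe : kFA + cF ≠ kFB + cF → sA = -sB) :
    (kGA + cG = kGB + cG →
      sA * u * ((-1 : ℤ) ^ kCA1 * (-1) ^ kCA2 * w) = sB * u * ((-1) ^ kCB1 * (-1) ^ kCB2 * w)) ∧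
    (kGA + cG ≠ kGB + cG →
      sA * u * ((-1 : ℤ) ^ kCA1 * (-1) ^ kCA2 * w)
        = -(sB * u * ((-1) ^ kCB1 * (-1) ^ kCB2 * w))) := by
  have e1 : (-1 : ℤ) ^ kCA1 * (-1) ^ kCA2 = (-1) ^ (kCA1 + kCA2) := (pow_add _ _ _).symm
  have e2 : (-1 : ℤ) ^ kCB1 * (-1) ^ kCB2 = (-1) ^ (kCB1 + kCB2) := (pow_add _ _ _).symm
  rw [e1, e2]
  constructor <;> intro h
  · by_cases hf : kFA = kFB
    · rw [hEq (by omega), pow_neg_one_eq_of (kCA1 + kCA2) (kCB1 + kCB2) (by omega)]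
    · rw [hNe (by omega), pow_neg_one_ne_of (kCA1 + kCA2) (kCB1 + kCB2) (by omega)]; ring
  · by_cases hf : kFA = kFB
    · rw [hEq (by omega), pow_neg_one_ne_of (kCA1 + kCA2) (kCB1 + kCB2) (by omega)]; ring
    · rw [hNe (by omega), pow_neg_one_eq_of (kCA1 + kCA2) (kCB1 + kCB2) (by omega)]; ring

lemma ne_bool (x y : Bool) (h : x ≠ y) : y = !x := by
  cases x <;> cases y <;> simp_all

lemma if_flip_sum (x y : Bool) :
    (if x ≠ y then (1 : ℕ) else 0) + (if (!x) ≠ y then 1 else 0) = 1 := by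
  cases x <;> cases y <;> simp

lemma par_coord (a f g : Bool) :
    ((if g ≠ f ∧ g ≠ a then (1 : ℕ) else 0) + (if g ≠ f ∧ g ≠ !a then 1 else 0)) % 2
      = ((if a ≠ f then (1 : ℕ) else 0) + (if a ≠ g then 1 else 0)) % 2 := by
  cases a <;> cases f <;> cases g <;> simp

lemma if_le_one (P : Prop) [Decidable P] : (if P then (1 : ℕ) else 0) ≤ 1 := by
  split_ifs <;> omega

/-! ### Finite combinatorics of short squares -/

def flips1 (l : Fin 4) : Bool := decide (l = 1) || decide (l = 3)
def flips2 (l : Fin 4) : Bool := decide (l = 2) || decide (l = 3)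

def eH (a1 h1 a2 h2 : Bool) (l : Fin 4) : ℕ :=
  (if (cond (flips1 l) (!a1) a1) ≠ h1 then 1 else 0) +
  (if (cond (flips2 l) (!a2) a2) ≠ h2 then 1 else 0)

def kCq (a1 f1 g1 a2 f2 g2 : Bool) (l : Fin 4) : ℕ :=
  (if g1 ≠ f1 ∧ g1 ≠ (cond (flips1 l) (!a1) a1) then 1 else 0) +
  (if g2 ≠ f2 ∧ g2 ≠ (cond (flips2 l) (!a2) a2) then 1 else 0)

abbrev pat (b : Fin 4 → Bool) (k : Fin 4) : Prop :=
  (∀ l m : Fin 4, l ≠ k → m ≠ k → b l = b m) ∧ ∃ l : Fin 4, l ≠ k ∧ b l ≠ b k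

lemma eH_0 (a1 h1 a2 h2 : Bool) :
    eH a1 h1 a2 h2 0 = (if a1 ≠ h1 then 1 else 0) + (if a2 ≠ h2 then 1 else 0) := rfl
lemma eH_1 (a1 h1 a2 h2 : Bool) :
    eH a1 h1 a2 h2 1 = (if (!a1) ≠ h1 then 1 else 0) + (if a2 ≠ h2 then 1 else 0) := rfl
lemma eH_2 (a1 h1 a2 h2 : Bool) :
    eH a1 h1 a2 h2 2 = (if a1 ≠ h1 then 1 else 0) + (if (!a2) ≠ h2 then 1 else 0) := rfl
lemma eH_3 (a1 h1 a2 h2 : Bool) :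
    eH a1 h1 a2 h2 3 = (if (!a1) ≠ h1 then 1 else 0) + (if (!a2) ≠ h2 then 1 else 0) := rfl

lemma kCq_0 (a1 f1 g1 a2 f2 g2 : Bool) :
    kCq a1 f1 g1 a2 f2 g2 0
      = (if g1 ≠ f1 ∧ g1 ≠ a1 then 1 else 0) + (if g2 ≠ f2 ∧ g2 ≠ a2 then 1 else 0) := rfl
lemma kCq_1 (a1 f1 g1 a2 f2 g2 : Bool) :
    kCq a1 f1 g1 a2 f2 g2 1
      = (if g1 ≠ f1 ∧ g1 ≠ !a1 then 1 else 0) + (if g2 ≠ f2 ∧ g2 ≠ a2 then 1 else 0) := rfl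
lemma kCq_2 (a1 f1 g1 a2 f2 g2 : Bool) :
    kCq a1 f1 g1 a2 f2 g2 2
      = (if g1 ≠ f1 ∧ g1 ≠ a1 then 1 else 0) + (if g2 ≠ f2 ∧ g2 ≠ !a2 then 1 else 0) := rfl
lemma kCq_3 (a1 f1 g1 a2 f2 g2 : Bool) :
    kCq a1 f1 g1 a2 f2 g2 3
      = (if g1 ≠ f1 ∧ g1 ≠ !a1 then 1 else 0) + (if g2 ≠ f2 ∧ g2 ≠ !a2 then 1 else 0) := rfl

set_option maxHeartbeats 1000000 in
lemma square_bool : ∀ (b : Fin 4 → Bool) (a1 f1 g1 a2 f2 g2 : Bool) (k : Fin 4),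
    (∀ k' : Fin 4, pat b k' →
      (∀ l, eH a1 f1 a2 f2 l ≤ eH a1 f1 a2 f2 k') ∨ (∀ l, eH a1 f1 a2 f2 k' ≤ eH a1 f1 a2 f2 l)) →
    pat (fun l => xor (b l) (decide (kCq a1 f1 g1 a2 f2 g2 l % 2 = 1))) k →
    (∀ l, eH a1 g1 a2 g2 l ≤ eH a1 g1 a2 g2 k) ∨ (∀ l, eH a1 g1 a2 g2 k ≤ eH a1 g1 a2 g2 l) := by
  decide

lemma pat_xorc : ∀ (b : Fin 4 → Bool) (c : Bool) (k : Fin 4),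
    pat (fun l => xor (b l) c) k ↔ pat b k := by decide

lemma fin4_cases (P : Fin 4 → Prop) (h0 : P 0) (h1 : P 1) (h2 : P 2) (h3 : P 3) :
    ∀ l, P l := by
  intro l
  rcases l with ⟨v, hv⟩
  interval_cases v
  exacts [h0, h1, h2, h3]

lemma pm_mul (x y : ℤ) (hx : x = 1 ∨ x = -1) (hy : y = 1 ∨ y = -1) :
    x * y = 1 ∨ x * y = -1 := by
  rcases hx with rfl | rfl <;> rcases hy with rfl | rfl <;> norm_num

lemma pm_pow (m : ℕ) : (-1 : ℤ) ^ m = 1 ∨ (-1 : ℤ) ^ m = -1 := by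
  rcases Nat.even_or_odd m with h | h
  · left; exact h.neg_one_pow
  · right; exact h.neg_one_pow

lemma sign_eq_iff (x y : ℤ) (hx : x = 1 ∨ x = -1) (hy : y = 1 ∨ y = -1) :
    x = y ↔ decide (x = 1) = decide (y = 1) := by
  rcases hx with rfl | rfl <;> rcases hy with rfl | rfl <;> norm_num

lemma sign_pat_iff (s : Fin 4 → ℤ) (hs : ∀ l, s l = 1 ∨ s l = -1) (k : Fin 4) :
    ((∀ l m : Fin 4, l ≠ k → m ≠ k → s l = s m) ∧ ∃ l : Fin 4, l ≠ k ∧ s l ≠ s k)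
      ↔ pat (fun l => decide (s l = 1)) k := by
  constructor
  · rintro ⟨h1, l, hl, hne⟩
    exact ⟨fun l' m hl' hm => (sign_eq_iff _ _ (hs l') (hs m)).mp (h1 l' m hl' hm),
      l, hl, fun he => hne ((sign_eq_iff _ _ (hs l) (hs k)).mpr he)⟩
  · rintro ⟨h1, l, hl, hne⟩
    exact ⟨fun l' m hl' hm => (sign_eq_iff _ _ (hs l') (hs m)).mpr (h1 l' m hl' hm),
      l, hl, fun he => hne ((sign_eq_iff _ _ (hs l) (hs k)).mp he)⟩

lemma sign_decide (x u : ℤ) (hx : x = 1 ∨ x = -1) (hu : u = 1 ∨ u = -1) (m : ℕ) :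
    decide (x * u * (-1 : ℤ) ^ m = 1)
      = xor (xor (decide (x = 1)) (decide (m % 2 = 1))) (decide (u = -1)) := by
  rcases hx with rfl | rfl <;> rcases hu with rfl | rfl <;>
    rcases Nat.even_or_odd m with hm | hm <;>
    · first
      | (rw [hm.neg_one_pow]
         rw [Nat.even_iff] at hm
         simp [hm])
      | (rw [hm.neg_one_pow]
         rw [Nat.odd_iff] at hm
         simp [hm])

end CFB

/-- If `s_F` is an orientation of a Lagrangian matroid `M` relative to
the fundamental basis `F`, then for every basis `G` the map
`A ↦ s_F(A)·s_F(G)·(−1)^{|G∖(F∪A)|}` is an orientation of `M` relative to `G`. -/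
theorem change_of_fundamental_basis_is_orientation {n : ℕ}
    (ℬ : Finset (Finset (JJ n))) (hM : IsLagrangianMatroid ℬ)
    (F : Finset (JJ n)) (hF : F ∈ ℬ)
    (sF : Finset (JJ n) → ℤ) (hsF : IsOrientationRel ℬ F sF)
    (G : Finset (JJ n)) (hG : G ∈ ℬ) :
    IsOrientationRel ℬ G (fun A => sF A * sF G * (-1) ^ ((G \ (F ∪ A)).card)) := by
  classical
  obtain ⟨hval, hlongEq, hlongNe, hsq, hFF⟩ := hsF
  have hchar : ∀ A ∈ ℬ, ∀ x : JJ n, x ∈ A ↔ CFB.chi A x.1 = x.2 :=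
    fun A hA => CFB.mem_basis_iff hM hA
  have hFc := hchar F hF
  have hGc := hchar G hG
  have key : ∀ A B : Finset (JJ n), IsLongEdge ℬ A B →
      ((heightF G A = heightF G B →
        sF A * sF G * (-1 : ℤ) ^ ((G \ (F ∪ A)).card)
          = sF B * sF G * (-1) ^ ((G \ (F ∪ B)).card)) ∧
       (heightF G A ≠ heightF G B →
        sF A * sF G * (-1 : ℤ) ^ ((G \ (F ∪ A)).card)
          = -(sF B * sF G * (-1) ^ ((G \ (F ∪ B)).card)))) := by
    intro A B hE
    obtain ⟨⟨hAm, hBm, -, -⟩, i, j, hij1, hij2, hsd⟩ := id hE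
    have hA := hchar A hAm
    have hB := hchar B hBm
    have hij : i.1 ≠ j.1 := CFB.star_ne_fst hij1 hij2
    have hdiff := CFB.long_diff hA hB hsd
    have hBA1 : CFB.chi B i.1 = !CFB.chi A i.1 :=
      CFB.ne_bool _ _ ((hdiff i.1).mpr (Or.inl rfl))
    have hBA2 : CFB.chi B j.1 = !CFB.chi A j.1 :=
      CFB.ne_bool _ _ ((hdiff j.1).mpr (Or.inr rfl))
    have hoff : ∀ t, t ≠ i.1 → t ≠ j.1 → CFB.chi B t = CFB.chi A t := by
      intro t h1 h2
      have h := hdiff t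
      by_contra hne
      rcases (h.mp (fun he => hne he.symm)) with rfl | rfl
      · exact h1 rfl
      · exact h2 rfl
    -- decompositions of the four heights
    have dFA : heightF F A
        = ((if CFB.chi A i.1 ≠ CFB.chi F i.1 then 1 else 0)
            + (if CFB.chi A j.1 ≠ CFB.chi F j.1 then 1 else 0))
          + (Finset.univ.filter fun t =>
              (CFB.chi A t ≠ CFB.chi F t) ∧ t ≠ i.1 ∧ t ≠ j.1).card := by
      rw [CFB.height_eq hA hFc]; exact CFB.filter_split_pair _ _ hij _
    have dFB : heightF F B
        = ((if CFB.chi B i.1 ≠ CFB.chi F i.1 then 1 else 0)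
            + (if CFB.chi B j.1 ≠ CFB.chi F j.1 then 1 else 0))
          + (Finset.univ.filter fun t =>
              (CFB.chi A t ≠ CFB.chi F t) ∧ t ≠ i.1 ∧ t ≠ j.1).card := by
      rw [CFB.height_eq hB hFc, CFB.filter_split_pair i.1 j.1 hij _]
      congr 1
      exact CFB.core_congr _ _ _ _ (fun t h1 h2 => by rw [hoff t h1 h2])
    have dGA : heightF G A
        = ((if CFB.chi A i.1 ≠ CFB.chi G i.1 then 1 else 0)
            + (if CFB.chi A j.1 ≠ CFB.chi G j.1 then 1 else 0))
          + (Finset.univ.filter fun t =>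
              (CFB.chi A t ≠ CFB.chi G t) ∧ t ≠ i.1 ∧ t ≠ j.1).card := by
      rw [CFB.height_eq hA hGc]; exact CFB.filter_split_pair _ _ hij _
    have dGB : heightF G B
        = ((if CFB.chi B i.1 ≠ CFB.chi G i.1 then 1 else 0)
            + (if CFB.chi B j.1 ≠ CFB.chi G j.1 then 1 else 0))
          + (Finset.univ.filter fun t =>
              (CFB.chi A t ≠ CFB.chi G t) ∧ t ≠ i.1 ∧ t ≠ j.1).card := by
      rw [CFB.height_eq hB hGc, CFB.filter_split_pair i.1 j.1 hij _]
      congr 1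
      exact CFB.core_congr _ _ _ _ (fun t h1 h2 => by rw [hoff t h1 h2])
    have dCA : (G \ (F ∪ A)).card
        = ((if CFB.chi G i.1 ≠ CFB.chi F i.1 ∧ CFB.chi G i.1 ≠ CFB.chi A i.1 then 1 else 0)
            + (if CFB.chi G j.1 ≠ CFB.chi F j.1 ∧ CFB.chi G j.1 ≠ CFB.chi A j.1 then 1 else 0))
          + (Finset.univ.filter fun t =>
              (CFB.chi G t ≠ CFB.chi F t ∧ CFB.chi G t ≠ CFB.chi A t) ∧ t ≠ i.1 ∧ t ≠ j.1).card := by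
      rw [CFB.cdiff_eq hFc hA hGc]; exact CFB.filter_split_pair _ _ hij _
    have dCB : (G \ (F ∪ B)).card
        = ((if CFB.chi G i.1 ≠ CFB.chi F i.1 ∧ CFB.chi G i.1 ≠ CFB.chi B i.1 then 1 else 0)
            + (if CFB.chi G j.1 ≠ CFB.chi F j.1 ∧ CFB.chi G j.1 ≠ CFB.chi B j.1 then 1 else 0))
          + (Finset.univ.filter fun t =>
              (CFB.chi G t ≠ CFB.chi F t ∧ CFB.chi G t ≠ CFB.chi A t) ∧ t ≠ i.1 ∧ t ≠ j.1).card := by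
      rw [CFB.cdiff_eq hFc hB hGc, CFB.filter_split_pair i.1 j.1 hij _]
      congr 1
      exact CFB.core_congr _ _ _ _ (fun t h1 h2 => by rw [hoff t h1 h2])
    -- arithmetic facts
    have hF2 : ((if CFB.chi A i.1 ≠ CFB.chi F i.1 then 1 else 0)
            + (if CFB.chi A j.1 ≠ CFB.chi F j.1 then 1 else 0))
          + ((if CFB.chi B i.1 ≠ CFB.chi F i.1 then 1 else 0)
            + (if CFB.chi B j.1 ≠ CFB.chi F j.1 then 1 else 0)) = 2 := by
      rw [hBA1, hBA2]
      have h1 := CFB.if_flip_sum (CFB.chi A i.1) (CFB.chi F i.1)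
      have h2 := CFB.if_flip_sum (CFB.chi A j.1) (CFB.chi F j.1)
      omega
    have hG2 : ((if CFB.chi A i.1 ≠ CFB.chi G i.1 then 1 else 0)
            + (if CFB.chi A j.1 ≠ CFB.chi G j.1 then 1 else 0))
          + ((if CFB.chi B i.1 ≠ CFB.chi G i.1 then 1 else 0)
            + (if CFB.chi B j.1 ≠ CFB.chi G j.1 then 1 else 0)) = 2 := by
      rw [hBA1, hBA2]
      have h1 := CFB.if_flip_sum (CFB.chi A i.1) (CFB.chi G i.1)
      have h2 := CFB.if_flip_sum (CFB.chi A j.1) (CFB.chi G j.1)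
      omega
    have hpar : (((if CFB.chi G i.1 ≠ CFB.chi F i.1 ∧ CFB.chi G i.1 ≠ CFB.chi A i.1 then 1 else 0)
            + (if CFB.chi G j.1 ≠ CFB.chi F j.1 ∧ CFB.chi G j.1 ≠ CFB.chi A j.1 then 1 else 0))
          + ((if CFB.chi G i.1 ≠ CFB.chi F i.1 ∧ CFB.chi G i.1 ≠ CFB.chi B i.1 then 1 else 0)
            + (if CFB.chi G j.1 ≠ CFB.chi F j.1 ∧ CFB.chi G j.1 ≠ CFB.chi B j.1 then 1 else 0))) % 2
        = ((((if CFB.chi A i.1 ≠ CFB.chi F i.1 then 1 else 0)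
            + (if CFB.chi A j.1 ≠ CFB.chi F j.1 then 1 else 0)))
          + (((if CFB.chi A i.1 ≠ CFB.chi G i.1 then 1 else 0)
            + (if CFB.chi A j.1 ≠ CFB.chi G j.1 then 1 else 0)))) % 2 := by
      rw [hBA1, hBA2]
      have h1 := CFB.par_coord (CFB.chi A i.1) (CFB.chi F i.1) (CFB.chi G i.1)
      have h2 := CFB.par_coord (CFB.chi A j.1) (CFB.chi F j.1) (CFB.chi G j.1)
      omega
    have hEq' : ∀ h : heightF F A = heightF F B, sF A = sF B := hlongEq A B hE
    have hNe' : ∀ h : heightF F A ≠ heightF F B, sF A = -sF B := hlongNe A B hE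
    have main := CFB.core_long (sF A) (sF B) (sF G)
      ((-1 : ℤ) ^ ((Finset.univ.filter fun t =>
          (CFB.chi G t ≠ CFB.chi F t ∧ CFB.chi G t ≠ CFB.chi A t) ∧ t ≠ i.1 ∧ t ≠ j.1).card))
      _ _ _ _ _ _ _ _
      ((Finset.univ.filter fun t =>
          (CFB.chi A t ≠ CFB.chi F t) ∧ t ≠ i.1 ∧ t ≠ j.1).card)
      ((Finset.univ.filter fun t =>
          (CFB.chi A t ≠ CFB.chi G t) ∧ t ≠ i.1 ∧ t ≠ j.1).card)
      hF2 hG2 hpar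
      (fun h => hEq' (by omega))
      (fun h => hNe' (by omega))
    constructor
    · intro h
      rw [dCA, dCB]
      simp only [pow_add]
      exact main.1 (by omega)
    · intro h
      rw [dCA, dCB]
      simp only [pow_add]
      exact main.2 (by omega)
  refine ⟨?_, ?_, ?_, ?_, ?_⟩
  · intro A hA
    rcases hval A hA with h | h <;> rcases hval G hG with h' | h' <;>
      rcases Nat.even_or_odd ((G \ (F ∪ A)).card) with he | he <;>
      simp [h, h', he.neg_one_pow]
  · intro A B hE hh
    exact (key A B hE).1 hh
  · intro A B hE hh
    simpa using (key A B hE).2 hh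
  · intro v hSS k hk
    obtain ⟨A, i, j, hij, hv0, hv1, hv2, hv3, hmem⟩ := id hSS
    have hAmem : A ∈ ℬ := hv0 ▸ hmem 0
    have hA : ∀ x : JJ n, x ∈ A ↔ CFB.chi A x.1 = x.2 := hchar A hAmem
    have hch : ∀ l : Fin 4, ∀ x : JJ n, x ∈ v l ↔ CFB.chi (v l) x.1 = x.2 :=
      fun l => hchar (v l) (hmem l)
    have hc1 := CFB.chi_flip_one hA (hch 1) i hv1
    have hc2 := CFB.chi_flip_one hA (hch 2) j hv2
    have hc3 := CFB.chi_flip_two hA (hch 3) i j hv3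
    have hv0i : CFB.chi (v 0) i.1 = CFB.chi A i.1 := by rw [hv0]
    have hv0j : CFB.chi (v 0) j.1 = CFB.chi A j.1 := by rw [hv0]
    have hoff0 : ∀ t, t ≠ i.1 → t ≠ j.1 → CFB.chi (v 0) t = CFB.chi A t := by
      intro t _ _; rw [hv0]
    have hv1i : CFB.chi (v 1) i.1 = !CFB.chi A i.1 := by rw [hc1 i.1, if_pos rfl]
    have hv1j : CFB.chi (v 1) j.1 = CFB.chi A j.1 := by
      rw [hc1 j.1, if_neg (fun h => hij h.symm)]
    have hoff1 : ∀ t, t ≠ i.1 → t ≠ j.1 → CFB.chi (v 1) t = CFB.chi A t := by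
      intro t h1 _; rw [hc1 t, if_neg h1]
    have hv2i : CFB.chi (v 2) i.1 = CFB.chi A i.1 := by rw [hc2 i.1, if_neg hij]
    have hv2j : CFB.chi (v 2) j.1 = !CFB.chi A j.1 := by rw [hc2 j.1, if_pos rfl]
    have hoff2 : ∀ t, t ≠ i.1 → t ≠ j.1 → CFB.chi (v 2) t = CFB.chi A t := by
      intro t _ h2; rw [hc2 t, if_neg h2]
    have hv3i : CFB.chi (v 3) i.1 = !CFB.chi A i.1 := by rw [hc3 i.1, if_pos (Or.inl rfl)]
    have hv3j : CFB.chi (v 3) j.1 = !CFB.chi A j.1 := by rw [hc3 j.1, if_pos (Or.inr rfl)]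
    have hoff3 : ∀ t, t ≠ i.1 → t ≠ j.1 → CFB.chi (v 3) t = CFB.chi A t := by
      intro t h1 h2; rw [hc3 t, if_neg (by tauto)]
    have hsplit : ∀ X : Finset (JJ n), (∀ x : JJ n, x ∈ X ↔ CFB.chi X x.1 = x.2) →
        ∀ x1 x2 : Bool, CFB.chi X i.1 = x1 → CFB.chi X j.1 = x2 →
        (∀ t, t ≠ i.1 → t ≠ j.1 → CFB.chi X t = CFB.chi A t) →
        (heightF F X
            = ((if x1 ≠ CFB.chi F i.1 then 1 else 0) + (if x2 ≠ CFB.chi F j.1 then 1 else 0))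
              + (Finset.univ.filter fun t =>
                  (CFB.chi A t ≠ CFB.chi F t) ∧ t ≠ i.1 ∧ t ≠ j.1).card)
        ∧ (heightF G X
            = ((if x1 ≠ CFB.chi G i.1 then 1 else 0) + (if x2 ≠ CFB.chi G j.1 then 1 else 0))
              + (Finset.univ.filter fun t =>
                  (CFB.chi A t ≠ CFB.chi G t) ∧ t ≠ i.1 ∧ t ≠ j.1).card)
        ∧ ((G \ (F ∪ X)).card
            = ((if CFB.chi G i.1 ≠ CFB.chi F i.1 ∧ CFB.chi G i.1 ≠ x1 then 1 else 0)
                + (if CFB.chi G j.1 ≠ CFB.chi F j.1 ∧ CFB.chi G j.1 ≠ x2 then 1 else 0))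
              + (Finset.univ.filter fun t =>
                  (CFB.chi G t ≠ CFB.chi F t ∧ CFB.chi G t ≠ CFB.chi A t)
                    ∧ t ≠ i.1 ∧ t ≠ j.1).card) := by
      intro X hX x1 x2 hx1 hx2 hoffX
      refine ⟨?_, ?_, ?_⟩
      · rw [CFB.height_eq hX hFc, CFB.filter_split_pair i.1 j.1 hij _, hx1, hx2]
        congr 1
        exact CFB.core_congr _ _ _ _ (fun t h1 h2 => by rw [hoffX t h1 h2])
      · rw [CFB.height_eq hX hGc, CFB.filter_split_pair i.1 j.1 hij _, hx1, hx2]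
        congr 1
        exact CFB.core_congr _ _ _ _ (fun t h1 h2 => by rw [hoffX t h1 h2])
      · rw [CFB.cdiff_eq hFc hX hGc, CFB.filter_split_pair i.1 j.1 hij _, hx1, hx2]
        congr 1
        exact CFB.core_congr _ _ _ _ (fun t h1 h2 => by rw [hoffX t h1 h2])
    have d0 := hsplit (v 0) (hch 0) _ _ hv0i hv0j hoff0
    have d1 := hsplit (v 1) (hch 1) _ _ hv1i hv1j hoff1
    have d2 := hsplit (v 2) (hch 2) _ _ hv2i hv2j hoff2
    have d3 := hsplit (v 3) (hch 3) _ _ hv3i hv3j hoff3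
    have hhF : ∀ l : Fin 4, heightF F (v l)
        = CFB.eH (CFB.chi A i.1) (CFB.chi F i.1) (CFB.chi A j.1) (CFB.chi F j.1) l
          + (Finset.univ.filter fun t =>
              (CFB.chi A t ≠ CFB.chi F t) ∧ t ≠ i.1 ∧ t ≠ j.1).card :=
      CFB.fin4_cases _ (by rw [CFB.eH_0]; exact d0.1) (by rw [CFB.eH_1]; exact d1.1)
        (by rw [CFB.eH_2]; exact d2.1) (by rw [CFB.eH_3]; exact d3.1)
    have hhG : ∀ l : Fin 4, heightF G (v l)
        = CFB.eH (CFB.chi A i.1) (CFB.chi G i.1) (CFB.chi A j.1) (CFB.chi G j.1) l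
          + (Finset.univ.filter fun t =>
              (CFB.chi A t ≠ CFB.chi G t) ∧ t ≠ i.1 ∧ t ≠ j.1).card :=
      CFB.fin4_cases _ (by rw [CFB.eH_0]; exact d0.2.1) (by rw [CFB.eH_1]; exact d1.2.1)
        (by rw [CFB.eH_2]; exact d2.2.1) (by rw [CFB.eH_3]; exact d3.2.1)
    have hcard : ∀ l : Fin 4, (G \ (F ∪ v l)).card
        = CFB.kCq (CFB.chi A i.1) (CFB.chi F i.1) (CFB.chi G i.1)
            (CFB.chi A j.1) (CFB.chi F j.1) (CFB.chi G j.1) l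
          + (Finset.univ.filter fun t =>
              (CFB.chi G t ≠ CFB.chi F t ∧ CFB.chi G t ≠ CFB.chi A t)
                ∧ t ≠ i.1 ∧ t ≠ j.1).card :=
      CFB.fin4_cases _ (by rw [CFB.kCq_0]; exact d0.2.2) (by rw [CFB.kCq_1]; exact d1.2.2)
        (by rw [CFB.kCq_2]; exact d2.2.2) (by rw [CFB.kCq_3]; exact d3.2.2)
    have hs' : ∀ l : Fin 4, sF (v l) = 1 ∨ sF (v l) = -1 := fun l => hval (v l) (hmem l)
    have hsGv : ∀ l : Fin 4,
        sF (v l) * sF G * (-1 : ℤ) ^ ((G \ (F ∪ v l)).card) = 1 ∨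
        sF (v l) * sF G * (-1 : ℤ) ^ ((G \ (F ∪ v l)).card) = -1 :=
      fun l => CFB.pm_mul _ _ (CFB.pm_mul _ _ (hs' l) (hval G hG)) (CFB.pm_pow _)
    have hu0 : sF G * (-1 : ℤ) ^ ((Finset.univ.filter fun t =>
          (CFB.chi G t ≠ CFB.chi F t ∧ CFB.chi G t ≠ CFB.chi A t)
            ∧ t ≠ i.1 ∧ t ≠ j.1).card) = 1 ∨
        sF G * (-1 : ℤ) ^ ((Finset.univ.filter fun t =>
          (CFB.chi G t ≠ CFB.chi F t ∧ CFB.chi G t ≠ CFB.chi A t)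
            ∧ t ≠ i.1 ∧ t ≠ j.1).card) = -1 :=
      CFB.pm_mul _ _ (hval G hG) (CFB.pm_pow _)
    have hpat1 : CFB.pat (fun l => decide
        (sF (v l) * sF G * (-1 : ℤ) ^ ((G \ (F ∪ v l)).card) = 1)) k :=
      (CFB.sign_pat_iff _ hsGv k).mp hk
    have hfun : (fun l : Fin 4 => decide
          (sF (v l) * sF G * (-1 : ℤ) ^ ((G \ (F ∪ v l)).card) = 1))
        = fun l => xor (xor (decide (sF (v l) = 1))
            (decide (CFB.kCq (CFB.chi A i.1) (CFB.chi F i.1) (CFB.chi G i.1)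
              (CFB.chi A j.1) (CFB.chi F j.1) (CFB.chi G j.1) l % 2 = 1)))
            (decide (sF G * (-1 : ℤ) ^ ((Finset.univ.filter fun t =>
              (CFB.chi G t ≠ CFB.chi F t ∧ CFB.chi G t ≠ CFB.chi A t)
                ∧ t ≠ i.1 ∧ t ≠ j.1).card) = -1)) := by
      funext l
      rw [hcard l]
      have he : sF (v l) * sF G * (-1 : ℤ) ^ (CFB.kCq (CFB.chi A i.1) (CFB.chi F i.1)
            (CFB.chi G i.1) (CFB.chi A j.1) (CFB.chi F j.1) (CFB.chi G j.1) l
          + (Finset.univ.filter fun t =>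
              (CFB.chi G t ≠ CFB.chi F t ∧ CFB.chi G t ≠ CFB.chi A t)
                ∧ t ≠ i.1 ∧ t ≠ j.1).card)
        = sF (v l) * (sF G * (-1 : ℤ) ^ ((Finset.univ.filter fun t =>
              (CFB.chi G t ≠ CFB.chi F t ∧ CFB.chi G t ≠ CFB.chi A t)
                ∧ t ≠ i.1 ∧ t ≠ j.1).card))
          * (-1 : ℤ) ^ (CFB.kCq (CFB.chi A i.1) (CFB.chi F i.1) (CFB.chi G i.1)
              (CFB.chi A j.1) (CFB.chi F j.1) (CFB.chi G j.1) l) := by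
        rw [pow_add]; ring
      rw [he]
      exact CFB.sign_decide _ _ (hs' l) hu0 _
    rw [hfun] at hpat1
    have hpat2 := (CFB.pat_xorc _ _ k).mp hpat1
    have hFnum : ∀ k' : Fin 4, CFB.pat (fun l => decide (sF (v l) = 1)) k' →
        (∀ l, CFB.eH (CFB.chi A i.1) (CFB.chi F i.1) (CFB.chi A j.1) (CFB.chi F j.1) l
            ≤ CFB.eH (CFB.chi A i.1) (CFB.chi F i.1) (CFB.chi A j.1) (CFB.chi F j.1) k') ∨
        (∀ l, CFB.eH (CFB.chi A i.1) (CFB.chi F i.1) (CFB.chi A j.1) (CFB.chi F j.1) k'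
            ≤ CFB.eH (CFB.chi A i.1) (CFB.chi F i.1) (CFB.chi A j.1) (CFB.chi F j.1) l) := by
      intro k' hp
      have hZ := (CFB.sign_pat_iff (fun l => sF (v l)) hs' k').mpr hp
      rcases hsq v hSS k' hZ with h | h
      · left; intro l
        have h1 := h l
        rw [hhF l, hhF k'] at h1
        omega
      · right; intro l
        have h1 := h l
        rw [hhF l, hhF k'] at h1
        omega
    have hres := CFB.square_bool (fun l => decide (sF (v l) = 1))
      (CFB.chi A i.1) (CFB.chi F i.1) (CFB.chi G i.1)
      (CFB.chi A j.1) (CFB.chi F j.1) (CFB.chi G j.1) k hFnum hpat2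
    rcases hres with h | h
    · left; intro l
      rw [hhG l, hhG k]
      have h1 := h l
      omega
    · right; intro l
      rw [hhG l, hhG k]
      have h1 := h k  -- dummy
      have h2 := h l
      omega
  · have hGG : G \ (F ∪ G) = ∅ :=
      Finset.sdiff_eq_empty_iff_subset.mpr Finset.subset_union_right
    simp only [hGG, Finset.card_empty, pow_zero, mul_one]
    rcases hval G hG with h | h <;> rw [h] <;> norm_num
end

section
/- Let M be a Lagrangian matroid, F a basis of M, and s_F an orientation of M relative to F. For bases G, A of M define s(G,A) = s_F(A)·s_F(G)·(−1)^{|G∖(F∪A)|}. Then for all bases G, H, A of M, s(G,A) = s(H,A)·s(H,G)·(−1)^{|G∖(H∪A)|}. -/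
open Finset Matrix
open scoped Classical

open scoped Classical in
lemma basis_bits {n : ℕ} {A : Finset (JJ n)} (hadm : AdmissibleSet A) (hcard : A.card = n) :
    ∃ b : Fin n → Bool, ∀ x : JJ n, x ∈ A ↔ x.2 = b x.1 := by
  have hinj : Set.InjOn Prod.fst (A : Set (JJ n)) := by
    intro x hx y hy h
    by_contra hne
    have : y = starJ x := by
      have : y.2 = !x.2 := by
        cases hx2 : x.2 <;> cases hy2 : y.2 <;> simp_all [Prod.ext_iff]
      exact Prod.ext h.symm this
    exact hadm x hx (this ▸ hy)
  have himg : A.image Prod.fst = Finset.univ := by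
    apply Finset.eq_univ_of_card
    rw [Finset.card_image_of_injOn hinj, hcard]; simp
  have hsurj : ∀ i : Fin n, ∃ x ∈ A, x.1 = i := by
    intro i
    have : i ∈ A.image Prod.fst := himg ▸ Finset.mem_univ i
    simpa using this
  choose x hxA hx1 using hsurj
  refine ⟨fun i => (x i).2, fun y => ?_⟩
  constructor
  · intro hy
    have h2 := hinj hy (hxA y.1) (by rw [hx1])
    exact congrArg Prod.snd h2
  · intro hy
    have : y = x y.1 := Prod.ext (hx1 y.1).symm hy
    rw [this]; exact hxA y.1

open scoped Classical in
lemma card_sdiff_bits {n : ℕ} {F G A : Finset (JJ n)} {f g a : Fin n → Bool}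
    (hF : ∀ x : JJ n, x ∈ F ↔ x.2 = f x.1) (hG : ∀ x : JJ n, x ∈ G ↔ x.2 = g x.1)
    (hA : ∀ x : JJ n, x ∈ A ↔ x.2 = a x.1) :
    (G \ (F ∪ A)).card =
      (Finset.univ.filter (fun i => g i ≠ f i ∧ g i ≠ a i)).card := by
  have hset : G \ (F ∪ A) =
      (Finset.univ.filter (fun i => g i ≠ f i ∧ g i ≠ a i)).image (fun i => (i, g i)) := by
    ext x
    simp only [Finset.mem_sdiff, Finset.mem_union, Finset.mem_image, Finset.mem_filter,
      Finset.mem_univ, true_and, hF, hG, hA]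
    constructor
    · rintro ⟨h1, h2⟩
      push_neg at h2
      exact ⟨x.1, ⟨by rw [← h1]; exact fun hc => h2.1 hc, by rw [← h1]; exact fun hc => h2.2 hc⟩,
        Prod.ext rfl h1.symm⟩
    · rintro ⟨i, ⟨hf, ha⟩, rfl⟩
      exact ⟨rfl, by push_neg; exact ⟨fun hc => hf hc, fun hc => ha hc⟩⟩
  rw [hset, Finset.card_image_of_injective _ (fun i j hij => (Prod.ext_iff.1 hij).1)]

open scoped Classical in
lemma parity_bits {n : ℕ} (f g h a : Fin n → Bool) :
    Even ((Finset.univ.filter (fun i => g i ≠ f i ∧ g i ≠ a i)).card +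
      ((Finset.univ.filter (fun i => h i ≠ f i ∧ h i ≠ a i)).card +
       ((Finset.univ.filter (fun i => h i ≠ f i ∧ h i ≠ g i)).card +
        (Finset.univ.filter (fun i => g i ≠ h i ∧ g i ≠ a i)).card))) := by
  simp only [Finset.card_filter]
  rw [← Finset.sum_add_distrib, ← Finset.sum_add_distrib, ← Finset.sum_add_distrib]
  apply Finset.even_sum
  intro i _
  rcases Bool.eq_false_or_eq_true (f i) with hf | hf <;>
  rcases Bool.eq_false_or_eq_true (g i) with hg | hg <;>
  rcases Bool.eq_false_or_eq_true (h i) with hh | hh <;>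
  rcases Bool.eq_false_or_eq_true (a i) with ha | ha <;>
  simp [hf, hg, hh, ha]

lemma neg_one_pow_of_even_add {p k : ℕ} (hpk : Even (p + k)) : ((-1 : ℤ)) ^ p = (-1) ^ k := by
  have h1 : ((-1 : ℤ)) ^ (p + k) = 1 := Even.neg_one_pow hpk
  have : ((-1 : ℤ)) ^ p * (-1) ^ p * (-1) ^ k = (-1) ^ k := by
    rw [← pow_add, Even.neg_one_pow ⟨p, rfl⟩, one_mul]
  calc ((-1 : ℤ)) ^ p = (-1) ^ p * ((-1) ^ (p + k)) := by rw [h1, mul_one]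
    _ = (-1) ^ p * (-1) ^ p * (-1) ^ k := by rw [pow_add, mul_assoc]
    _ = (-1) ^ k := this

/-- With `s(G,A) = s_F(A)·s_F(G)·(−1)^{|G∖(F∪A)|}` defined from an
orientation `s_F` of a Lagrangian matroid relative to `F`, one has
`s(G,A) = s(H,A)·s(H,G)·(−1)^{|G∖(H∪A)|}` for all bases `G, H, A`. -/
theorem cocycle_identity_for_relative_signs {n : ℕ}
    (ℬ : Finset (Finset (JJ n))) (hM : IsLagrangianMatroid ℬ)
    (F : Finset (JJ n)) (hF : F ∈ ℬ)
    (sF : Finset (JJ n) → ℤ) (hsF : IsOrientationRel ℬ F sF) :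
    ∀ G ∈ ℬ, ∀ H ∈ ℬ, ∀ A ∈ ℬ,
      sF A * sF G * (-1) ^ ((G \ (F ∪ A)).card) =
        (sF A * sF H * (-1) ^ ((H \ (F ∪ A)).card)) *
          (sF G * sF H * (-1) ^ ((H \ (F ∪ G)).card)) *
          (-1) ^ ((G \ (H ∪ A)).card) := by
  intro G hG H hH A hA
  obtain ⟨hGa, hGc⟩ := hM.1 G hG
  obtain ⟨hHa, hHc⟩ := hM.1 H hH
  obtain ⟨hAa, hAc⟩ := hM.1 A hA
  obtain ⟨hFa, hFc⟩ := hM.1 F hF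
  obtain ⟨f, hf⟩ := basis_bits hFa hFc
  obtain ⟨g, hg⟩ := basis_bits hGa hGc
  obtain ⟨h, hhb⟩ := basis_bits hHa hHc
  obtain ⟨a, ha⟩ := basis_bits hAa hAc
  rw [card_sdiff_bits hf hg ha, card_sdiff_bits hf hhb ha, card_sdiff_bits hf hhb hg,
    card_sdiff_bits hhb hg ha]
  have hpow :
      ((-1 : ℤ)) ^ (Finset.univ.filter (fun i => g i ≠ f i ∧ g i ≠ a i)).card =
        (-1) ^ ((Finset.univ.filter (fun i => h i ≠ f i ∧ h i ≠ a i)).card +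
          ((Finset.univ.filter (fun i => h i ≠ f i ∧ h i ≠ g i)).card +
           (Finset.univ.filter (fun i => g i ≠ h i ∧ g i ≠ a i)).card)) :=
    neg_one_pow_of_even_add (parity_bits f g h a)
  rcases hsF.1 H hH with h1 | h1 <;> rw [hpow, h1] <;> ring
end
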